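/- arXiv:2105.09946 — 3 statements merged into one kernel-verified Lean document; each statement's English description precedes it below -/
import Mathlib

section
/- For every s ∈ (0, 1/2], t > 0 and x > 0, one has the contour-integral identity ∫₀^∞ e^{−t ξ^{2s}} cos(xξ) dξ = (1/x) ∫₀^∞ exp(−t (u/x)^{2s} cos(πs)) · sin(t (u/x)^{2s} sin(πs)) · e^{−u} du, both integrals being absolutely convergent. -/
open MeasureTheory

/-- The nonlocal dispersion operator `D[u](t,x)`, in symmetrized form. -/
noncomputable def Dop (J : ℝ → ℝ) (u : ℝ → ℝ → ℝ) (t x : ℝ) : ℝ :=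
  ∫ z in Set.Ioi (0:ℝ), (u t (x + z) + u t (x - z) - 2 * u t x) * J z

/-- Hypothesis (H) on the kernel `J`. -/
def HypH (s J0 J1 R0 : ℝ) (J : ℝ → ℝ) : Prop :=
  0 < J0 ∧ 0 < J1 ∧ 1 ≤ R0 ∧
  (∀ z, 0 ≤ J z) ∧ (∀ z, J (-z) = J z) ∧
  (∫ z in Set.Icc (-1:ℝ) 1, J z * z ^ 2) ≤ 2 * J1 ∧
  (∀ z : ℝ, 1 ≤ |z| → J z ≤ J0 * |z| ^ (-(1 + 2*s))) ∧
  (∀ z : ℝ, R0 ≤ |z| → J0⁻¹ * |z| ^ (-(1 + 2*s)) ≤ J z)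

/-- An ignition nonlinearity with threshold `θ`. -/
def Ignition (θ : ℝ) (f : ℝ → ℝ) : Prop :=
  (∃ K : NNReal, LipschitzOnWith K f (Set.Icc 0 1)) ∧
  (∀ u : ℝ, 0 ≤ u → u ≤ θ → f u = 0) ∧
  (∀ u : ℝ, θ < u → u < 1 → 0 < f u) ∧
  f 1 = 0

/-- The profile `w(t,x) = (x^{2s}/(κt) + γ)⁻¹`. -/
noncomputable def w (s κ γ t x : ℝ) : ℝ := (x ^ (2*s) / (κ * t) + γ)⁻¹

/-- The level point `X(t)` where `w(t, X(t)) = ε`. -/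
noncomputable def X (s κ γ ε t : ℝ) : ℝ :=
  (ε⁻¹ - γ) ^ (1/(2*s)) * (κ * t) ^ (1/(2*s))

/-- The sub-solution `u̲`. -/
noncomputable def ubar (s κ γ ε t x : ℝ) : ℝ :=
  if x ≤ X s κ γ ε t then ε
  else 3 * (1 - w s κ γ t x / ε + (w s κ γ t x) ^ 2 / (3 * ε ^ 2)) * w s κ γ t x

/-- The Fourier symbol of the dispersion operator. -/
noncomputable def W (J : ℝ → ℝ) (ξ : ℝ) : ℝ := ∫ y : ℝ, (Real.cos (ξ * y) - 1) * J y

open Real Set Complex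

noncomputable def cE (c t x θ ρ : ℝ) : ℂ :=
  -(↑(t * ρ ^ c)) * Complex.exp (↑(-(c * θ)) * Complex.I)
    - Complex.I * ↑x * ↑ρ * Complex.exp (↑(-θ) * Complex.I)

noncomputable def cg (c t x θ ρ : ℝ) : ℂ :=
  Complex.exp (cE c t x θ ρ) * Complex.exp (↑(-θ) * Complex.I)

noncomputable def cP (c t x θ ρ : ℝ) : ℂ :=
  1 - (↑(t * c * ρ ^ c)) * Complex.exp (↑(-(c * θ)) * Complex.I)
    - Complex.I * ↑x * ↑ρ * Complex.exp (↑(-θ) * Complex.I)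

noncomputable def cD (c t x θ ρ : ℝ) : ℂ :=
  Complex.exp (↑(-θ) * Complex.I) * Complex.exp (cE c t x θ ρ) * cP c t x θ ρ

lemma cE_re (c t x θ ρ : ℝ) :
    (cE c t x θ ρ).re = -(t * ρ ^ c * Real.cos (c * θ)) - x * ρ * Real.sin θ := by
  simp only [cE, Complex.sub_re, Complex.neg_re, Complex.neg_im, Complex.mul_re, Complex.mul_im,
    Complex.I_re, Complex.I_im, Complex.ofReal_re, Complex.ofReal_im,
    Complex.exp_ofReal_mul_I_re, Complex.exp_ofReal_mul_I_im, Real.cos_neg, Real.sin_neg]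
  ring

lemma cE_im (c t x θ ρ : ℝ) :
    (cE c t x θ ρ).im = t * ρ ^ c * Real.sin (c * θ) - x * ρ * Real.cos θ := by
  simp only [cE, Complex.sub_im, Complex.neg_re, Complex.neg_im, Complex.mul_re, Complex.mul_im,
    Complex.I_re, Complex.I_im, Complex.ofReal_re, Complex.ofReal_im,
    Complex.exp_ofReal_mul_I_re, Complex.exp_ofReal_mul_I_im, Real.cos_neg, Real.sin_neg]
  ring

lemma norm_cg (c t x θ ρ : ℝ) :
    ‖cg c t x θ ρ‖ = Real.exp ((cE c t x θ ρ).re) := by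
  simp [cg, Complex.norm_exp, map_mul]

lemma norm_cP_le (c t x θ ρ : ℝ) (hρ : 0 ≤ ρ) (ht : 0 ≤ t) (hc : 0 ≤ c) (hx : 0 ≤ x) :
    ‖cP c t x θ ρ‖ ≤ 1 + t * c * ρ ^ c + x * ρ := by
  refine (norm_sub_le _ _).trans ?_
  gcongr
  · refine (norm_sub_le _ _).trans ?_
    gcongr
    · simp
    · simp only [norm_mul, Complex.norm_exp_ofReal_mul_I, mul_one,
        Complex.norm_real, Real.norm_eq_abs]
      rw [_root_.abs_of_nonneg (by positivity), _root_.abs_of_nonneg hc,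
        _root_.abs_of_nonneg (by positivity : (0:ℝ) ≤ ρ ^ c)]
  · simp only [norm_mul, Complex.norm_exp_ofReal_mul_I, mul_one,
      Complex.norm_real, Real.norm_eq_abs, Complex.norm_I, one_mul]
    rw [_root_.abs_of_nonneg hx, _root_.abs_of_nonneg hρ]

lemma norm_cD_le (c t x θ ρ : ℝ) (hρ : 0 ≤ ρ) (ht : 0 ≤ t) (hc : 0 ≤ c) (hx : 0 ≤ x) :
    ‖cD c t x θ ρ‖ ≤ (1 + t * c * ρ ^ c + x * ρ) * Real.exp ((cE c t x θ ρ).re) := by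
  rw [cD]
  calc ‖Complex.exp (↑(-θ) * Complex.I) * Complex.exp (cE c t x θ ρ) * cP c t x θ ρ‖
      = Real.exp ((cE c t x θ ρ).re) * ‖cP c t x θ ρ‖ := by
        simp [norm_mul, Complex.norm_exp_ofReal_mul_I, Complex.norm_exp]
    _ ≤ Real.exp ((cE c t x θ ρ).re) * (1 + t * c * ρ ^ c + x * ρ) := by
        gcongr; exact norm_cP_le c t x θ ρ hρ ht hc hx
    _ = _ := by ring

lemma hasDerivAt_cg_theta (c t x ρ : ℝ) (θ : ℝ) :
    HasDerivAt (fun θ => cg c t x θ ρ) (-Complex.I * cD c t x θ ρ) θ := by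
  have h1 : HasDerivAt (fun θ : ℝ => Complex.exp (↑(-(c * θ)) * Complex.I))
      (Complex.exp (↑(-(c * θ)) * Complex.I) * (↑(-c : ℝ) * Complex.I)) θ := by
    have h0 : HasDerivAt (fun θ : ℝ => -(c * θ)) (-c) θ := by
      have := ((hasDerivAt_id' θ).const_mul c).neg
      simp only [mul_one] at this
      exact this
    exact ((h0.ofReal_comp).mul_const Complex.I).cexp
  have h2 : HasDerivAt (fun θ : ℝ => Complex.exp (↑(-θ) * Complex.I))
      (Complex.exp (↑(-θ) * Complex.I) * (↑(-1 : ℝ) * Complex.I)) θ := by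
    have h0 : HasDerivAt (fun θ : ℝ => -θ) (-1) θ := (hasDerivAt_id θ).neg
    exact ((h0.ofReal_comp).mul_const Complex.I).cexp
  have hE : HasDerivAt (fun θ => cE c t x θ ρ)
      (-(↑(t * ρ ^ c)) * (Complex.exp (↑(-(c * θ)) * Complex.I) * (↑(-c : ℝ) * Complex.I))
        - Complex.I * ↑x * ↑ρ *
          (Complex.exp (↑(-θ) * Complex.I) * (↑(-1 : ℝ) * Complex.I))) θ :=
    (h1.const_mul _).sub (h2.const_mul _)
  have h := hE.cexp.fun_mul h2
  have hfun : (fun θ => cg c t x θ ρ) =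
      fun θ => Complex.exp (cE c t x θ ρ) * Complex.exp (↑(-θ) * Complex.I) := rfl
  rw [hfun]
  convert h using 1
  · rfl
  simp only [cD, cP]
  push_cast
  ring

lemma hasDerivAt_cg_rho (c t x θ : ℝ) {ρ : ℝ} (hρ : 0 < ρ) :
    HasDerivAt (fun ρ : ℝ => (↑ρ : ℂ) * Complex.exp (↑(-θ) * Complex.I) * Complex.exp (cE c t x θ ρ))
      (cD c t x θ ρ) ρ := by
  have hr : HasDerivAt (fun ρ : ℝ => ρ ^ c) (c * ρ ^ (c - 1)) ρ :=
    Real.hasDerivAt_rpow_const (Or.inl hρ.ne')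
  have hid : HasDerivAt (fun ρ : ℝ => (↑ρ : ℂ)) 1 ρ := by
    simpa using (hasDerivAt_id ρ).ofReal_comp
  have hE : HasDerivAt (fun ρ => cE c t x θ ρ)
      (-(↑(t * (c * ρ ^ (c - 1)))) * Complex.exp (↑(-(c * θ)) * Complex.I)
        - Complex.I * ↑x * Complex.exp (↑(-θ) * Complex.I)) ρ := by
    have ha : HasDerivAt (fun ρ : ℝ => t * ρ ^ c) (t * (c * ρ ^ (c - 1))) ρ := hr.const_mul t
    have hb := ((ha.ofReal_comp).neg.mul_const (Complex.exp (↑(-(c * θ)) * Complex.I)))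
    have hc2 : HasDerivAt (fun ρ : ℝ => Complex.I * ↑x * ↑ρ * Complex.exp (↑(-θ) * Complex.I))
        (Complex.I * ↑x * Complex.exp (↑(-θ) * Complex.I)) ρ := by
      have := (hid.const_mul (Complex.I * ↑x)).mul_const (Complex.exp (↑(-θ) * Complex.I))
      simpa using this
    exact hb.sub hc2
  have hprod : HasDerivAt (fun ρ : ℝ => (↑ρ : ℂ) * Complex.exp (↑(-θ) * Complex.I))
      (Complex.exp (↑(-θ) * Complex.I)) ρ := by
    simpa using hid.mul_const (Complex.exp (↑(-θ) * Complex.I))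
  have h := hprod.fun_mul hE.cexp
  convert h using 1
  · rfl
  have hrr : (↑(ρ ^ c) : ℂ) = ↑ρ * ↑(ρ ^ (c - 1)) := by
    rw [← Complex.ofReal_mul]
    norm_cast
    rw [Real.rpow_sub hρ, Real.rpow_one, mul_comm, div_mul_cancel₀ _ hρ.ne']
  simp only [cD, cP]
  push_cast [hrr]
  ring

noncomputable def cB (c t x ρ : ℝ) : ℝ :=
  (1 + t * ρ ^ c + x * ρ) *
    (Real.exp (-(t * (Real.sqrt 2 / 2)) * ρ ^ c) + Real.exp (-(x * (Real.sqrt 2 / 2)) * ρ))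

lemma sqrt2_half_pos : 0 < Real.sqrt 2 / 2 := by positivity

lemma cos_ge_of_small {y : ℝ} (h0 : 0 ≤ y) (h1 : y ≤ Real.pi / 4) :
    Real.sqrt 2 / 2 ≤ Real.cos y := by
  rw [← Real.cos_pi_div_four]
  apply Real.cos_le_cos_of_nonneg_of_le_pi h0 (by linarith [Real.pi_pos]) h1

lemma exp_re_bound {c t x θ ρ : ℝ} (hc : 0 < c) (hc1 : c ≤ 1) (ht : 0 < t) (hx : 0 < x)
    (hθ : θ ∈ Set.Icc 0 (Real.pi / 2)) (hρ : 0 ≤ ρ) :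
    Real.exp (-(t * ρ ^ c * Real.cos (c * θ)) - x * ρ * Real.sin θ) ≤
      Real.exp (-(t * (Real.sqrt 2 / 2)) * ρ ^ c) + Real.exp (-(x * (Real.sqrt 2 / 2)) * ρ) := by
  obtain ⟨hθ0, hθ2⟩ := hθ
  have hpi := Real.pi_pos
  have hρc : (0:ℝ) ≤ ρ ^ c := Real.rpow_nonneg hρ c
  have hsin : 0 ≤ Real.sin θ := Real.sin_nonneg_of_nonneg_of_le_pi hθ0 (by linarith)
  have hcθ0 : 0 ≤ c * θ := mul_nonneg hc.le hθ0
  rcases le_or_gt θ (Real.pi / 4) with h | h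
  · have hcos : Real.sqrt 2 / 2 ≤ Real.cos (c * θ) := by
      apply cos_ge_of_small hcθ0
      calc c * θ ≤ 1 * θ := by nlinarith
        _ ≤ Real.pi / 4 := by linarith
    calc Real.exp (-(t * ρ ^ c * Real.cos (c * θ)) - x * ρ * Real.sin θ)
        ≤ Real.exp (-(t * (Real.sqrt 2 / 2)) * ρ ^ c) := by
          apply Real.exp_le_exp.mpr
          nlinarith [mul_nonneg (mul_nonneg ht.le hρc) (sub_nonneg.mpr hcos),
            mul_nonneg (mul_nonneg hx.le hρ) hsin]
      _ ≤ _ := le_add_of_nonneg_right (Real.exp_pos _).le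
  · have hsin2 : Real.sqrt 2 / 2 ≤ Real.sin θ := by
      rw [← Real.cos_pi_div_two_sub]
      apply cos_ge_of_small <;> [linarith; linarith]
    have hcos0 : 0 ≤ Real.cos (c * θ) := by
      apply Real.cos_nonneg_of_mem_Icc
      constructor
      · linarith
      · calc c * θ ≤ 1 * (Real.pi / 2) := by nlinarith
          _ = Real.pi / 2 := one_mul _
    calc Real.exp (-(t * ρ ^ c * Real.cos (c * θ)) - x * ρ * Real.sin θ)
        ≤ Real.exp (-(x * (Real.sqrt 2 / 2)) * ρ) := by
          apply Real.exp_le_exp.mpr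
          nlinarith [mul_nonneg (mul_nonneg ht.le hρc) hcos0,
            mul_nonneg (mul_nonneg hx.le hρ) (sub_nonneg.mpr hsin2)]
      _ ≤ _ := le_add_of_nonneg_left (Real.exp_pos _).le

lemma integ_aux {q b p : ℝ} (hq : 0 ≤ q) (hp : 0 < p) (hb : 0 < b) :
    IntegrableOn (fun ρ : ℝ => ρ ^ q * Real.exp (-b * ρ ^ p)) (Set.Ioi 0) := by
  have hf : IntegrableOn (fun y : ℝ => y ^ ((q + 1 - p) / p) * Real.exp (-b * y)) (Set.Ioi 0) := by
    have h := integrableOn_rpow_mul_exp_neg_mul_rpow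
      (s := (q + 1 - p) / p) (p := 1) (b := b)
      (by rw [neg_lt, ← neg_div, div_lt_one hp]; nlinarith) zero_lt_one hb
    exact h.congr_fun (fun y hy => by beta_reduce; rw [Real.rpow_one]) measurableSet_Ioi
  have := (integrableOn_Ioi_comp_rpow_iff'
    (fun y : ℝ => y ^ ((q + 1 - p) / p) * Real.exp (-b * y)) (ne_of_gt hp)).mpr hf
  refine this.congr_fun (fun ρ hρ => ?_) measurableSet_Ioi
  have hρ0 : (0:ℝ) < ρ := hρ
  beta_reduce
  rw [smul_eq_mul, ← Real.rpow_mul hρ0.le, ← mul_assoc, ← Real.rpow_add hρ0]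
  congr 2
  field_simp
  ring

lemma cB_integrable {c t x : ℝ} (hc : 0 < c) (hc1 : c ≤ 1) (ht : 0 < t) (hx : 0 < x) :
    IntegrableOn (cB c t x) (Set.Ioi 0) := by
  set b1 := t * (Real.sqrt 2 / 2) with hb1def
  set b2 := x * (Real.sqrt 2 / 2) with hb2def
  have hb1 : 0 < b1 := by positivity
  have hb2 : 0 < b2 := by positivity
  have A1 : IntegrableOn (fun ρ : ℝ => Real.exp (-b1 * ρ ^ c)) (Set.Ioi 0) := by
    have := integ_aux (q := 0) le_rfl hc hb1
    exact this.congr_fun (fun ρ hρ => by beta_reduce; rw [Real.rpow_zero, one_mul]) measurableSet_Ioi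
  have A2 : IntegrableOn (fun ρ : ℝ => ρ ^ c * Real.exp (-b1 * ρ ^ c)) (Set.Ioi 0) :=
    integ_aux hc.le hc hb1
  have A3 : IntegrableOn (fun ρ : ℝ => ρ * Real.exp (-b1 * ρ ^ c)) (Set.Ioi 0) := by
    have := integ_aux (q := 1) zero_le_one hc hb1
    exact this.congr_fun (fun ρ hρ => by beta_reduce; rw [Real.rpow_one]) measurableSet_Ioi
  have B1 : IntegrableOn (fun ρ : ℝ => Real.exp (-b2 * ρ)) (Set.Ioi 0) := by
    simpa [neg_mul] using exp_neg_integrableOn_Ioi 0 hb2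
  have B2 : IntegrableOn (fun ρ : ℝ => ρ ^ c * Real.exp (-b2 * ρ)) (Set.Ioi 0) := by
    have := integ_aux (q := c) (p := 1) hc.le zero_lt_one hb2
    exact this.congr_fun (fun ρ hρ => by beta_reduce; rw [Real.rpow_one]) measurableSet_Ioi
  have B3 : IntegrableOn (fun ρ : ℝ => ρ * Real.exp (-b2 * ρ)) (Set.Ioi 0) := by
    have := integ_aux (q := 1) (p := 1) zero_le_one zero_lt_one hb2
    exact this.congr_fun (fun ρ hρ => by norm_num) measurableSet_Ioi
  have hsum : IntegrableOn (fun ρ : ℝ =>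
      (Real.exp (-b1 * ρ ^ c) + t * (ρ ^ c * Real.exp (-b1 * ρ ^ c))
        + x * (ρ * Real.exp (-b1 * ρ ^ c)))
      + (Real.exp (-b2 * ρ) + t * (ρ ^ c * Real.exp (-b2 * ρ))
        + x * (ρ * Real.exp (-b2 * ρ)))) (Set.Ioi 0) :=
    (((A1.add (A2.const_mul t)).add (A3.const_mul x)).add
      ((B1.add (B2.const_mul t)).add (B3.const_mul x)))
  refine hsum.congr_fun (fun ρ hρ => ?_) measurableSet_Ioi
  simp only [cB]
  ring

lemma continuous_rpow_c {c : ℝ} (hc : 0 ≤ c) : Continuous (fun ρ : ℝ => ρ ^ c) :=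
  continuous_iff_continuousAt.mpr fun ρ => Real.continuousAt_rpow_const ρ c (Or.inr hc)

section Cont

variable {c t x θ ρ : ℝ}

lemma continuous_cE_rho (hc : 0 ≤ c) : Continuous (fun ρ => cE c t x θ ρ) := by
  unfold cE
  exact ((Complex.continuous_ofReal.comp
      (continuous_const.mul (continuous_rpow_c hc))).neg.mul continuous_const).sub
    ((continuous_const.mul Complex.continuous_ofReal).mul continuous_const)

lemma continuous_cg_rho (hc : 0 ≤ c) : Continuous (fun ρ => cg c t x θ ρ) :=
  (Complex.continuous_exp.comp (continuous_cE_rho hc)).mul continuous_const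

lemma continuous_cD_rho (hc : 0 ≤ c) : Continuous (fun ρ => cD c t x θ ρ) := by
  have hP : Continuous (fun ρ => cP c t x θ ρ) := by
    unfold cP
    exact ((continuous_const.sub ((Complex.continuous_ofReal.comp
        (continuous_const.mul (continuous_rpow_c hc))).mul continuous_const)).sub
      ((continuous_const.mul Complex.continuous_ofReal).mul continuous_const))
  exact (continuous_const.mul
    (Complex.continuous_exp.comp (continuous_cE_rho hc))).mul hP

lemma continuous_cg_theta : Continuous (fun θ => cg c t x θ ρ) := by
  have e1 : Continuous fun θ : ℝ => Complex.exp (↑(-(c * θ)) * Complex.I) :=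
    Complex.continuous_exp.comp ((Complex.continuous_ofReal.comp
      (continuous_const.mul continuous_id).neg).mul continuous_const)
  have e2 : Continuous fun θ : ℝ => Complex.exp (↑(-θ) * Complex.I) :=
    Complex.continuous_exp.comp ((Complex.continuous_ofReal.comp
      continuous_id.neg).mul continuous_const)
  have hE : Continuous (fun θ => cE c t x θ ρ) := by
    unfold cE
    exact (continuous_const.mul e1).sub (continuous_const.mul e2)
  exact (Complex.continuous_exp.comp hE).mul e2

end Cont

section Bounds

variable {c t x θ ρ : ℝ}

lemma norm_cg_le_cB (hc : 0 < c) (hc1 : c ≤ 1) (ht : 0 < t) (hx : 0 < x)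
    (hθ : θ ∈ Set.Icc 0 (Real.pi / 2)) (hρ : 0 ≤ ρ) :
    ‖cg c t x θ ρ‖ ≤ cB c t x ρ := by
  rw [norm_cg, cE_re]
  have h1 := exp_re_bound hc hc1 ht hx hθ hρ
  have hρc : (0:ℝ) ≤ ρ ^ c := Real.rpow_nonneg hρ c
  have h2 : (1:ℝ) ≤ 1 + t * ρ ^ c + x * ρ := by nlinarith
  calc Real.exp (-(t * ρ ^ c * Real.cos (c * θ)) - x * ρ * Real.sin θ)
      ≤ Real.exp (-(t * (Real.sqrt 2 / 2)) * ρ ^ c)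
        + Real.exp (-(x * (Real.sqrt 2 / 2)) * ρ) := h1
    _ ≤ cB c t x ρ := by
      rw [cB]
      exact le_mul_of_one_le_left (by positivity) h2

lemma norm_cD_le_cB (hc : 0 < c) (hc1 : c ≤ 1) (ht : 0 < t) (hx : 0 < x)
    (hθ : θ ∈ Set.Icc 0 (Real.pi / 2)) (hρ : 0 ≤ ρ) :
    ‖cD c t x θ ρ‖ ≤ cB c t x ρ := by
  have h1 := norm_cD_le c t x θ ρ hρ ht.le hc.le hx.le
  rw [cE_re] at h1
  refine h1.trans ?_
  have h2 := exp_re_bound hc hc1 ht hx hθ hρ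
  have hρc : (0:ℝ) ≤ ρ ^ c := Real.rpow_nonneg hρ c
  have hxρ : (0:ℝ) ≤ x * ρ := mul_nonneg hx.le hρ
  have htc : (0:ℝ) ≤ t * c * ρ ^ c := by positivity
  have h3 : 1 + t * c * ρ ^ c + x * ρ ≤ 1 + t * ρ ^ c + x * ρ := by
    nlinarith [mul_nonneg (mul_nonneg ht.le hρc) (by linarith : (0:ℝ) ≤ 1 - c)]
  rw [cB]
  have h4 : (0:ℝ) ≤ 1 + t * c * ρ ^ c + x * ρ := by linarith
  exact mul_le_mul h3 h2 (Real.exp_pos _).le (by linarith)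

lemma integrable_cg (hc : 0 < c) (hc1 : c ≤ 1) (ht : 0 < t) (hx : 0 < x)
    (hθ : θ ∈ Set.Icc 0 (Real.pi / 2)) :
    IntegrableOn (fun ρ => cg c t x θ ρ) (Set.Ioi 0) := by
  refine (cB_integrable hc hc1 ht hx).mono'
    ((continuous_cg_rho hc.le).aestronglyMeasurable.restrict) ?_
  refine (ae_restrict_iff' measurableSet_Ioi).mpr (Filter.Eventually.of_forall fun ρ hρ => ?_)
  exact norm_cg_le_cB hc hc1 ht hx hθ (le_of_lt hρ)

lemma integrable_cD (hc : 0 < c) (hc1 : c ≤ 1) (ht : 0 < t) (hx : 0 < x)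
    (hθ : θ ∈ Set.Icc 0 (Real.pi / 2)) :
    IntegrableOn (fun ρ => cD c t x θ ρ) (Set.Ioi 0) := by
  refine (cB_integrable hc hc1 ht hx).mono'
    ((continuous_cD_rho hc.le).aestronglyMeasurable.restrict) ?_
  refine (ae_restrict_iff' measurableSet_Ioi).mpr (Filter.Eventually.of_forall fun ρ hρ => ?_)
  exact norm_cD_le_cB hc hc1 ht hx hθ (le_of_lt hρ)

end Bounds

lemma integral_cD_zero {c t x θ : ℝ} (hc : 0 < c) (hc1 : c ≤ 1) (ht : 0 < t) (hx : 0 < x)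
    (hθ : θ ∈ Set.Ioc 0 (Real.pi / 2)) :
    ∫ ρ in Set.Ioi (0:ℝ), cD c t x θ ρ = 0 := by
  obtain ⟨hθ0, hθ2⟩ := hθ
  have hpi := Real.pi_pos
  set f : ℝ → ℂ := fun ρ => (↑ρ : ℂ) * Complex.exp (↑(-θ) * Complex.I)
    * Complex.exp (cE c t x θ ρ) with hf
  have hfc : Continuous f := by
    exact ((Complex.continuous_ofReal.mul continuous_const).mul
      (Complex.continuous_exp.comp (continuous_cE_rho hc.le)))
  have hsin : 0 < Real.sin θ := Real.sin_pos_of_pos_of_lt_pi hθ0 (by linarith)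
  have htend : Filter.Tendsto f Filter.atTop (nhds 0) := by
    apply squeeze_zero_norm' (a := fun ρ => ρ ^ (1:ℝ) * Real.exp (-(x * Real.sin θ) * ρ))
    · filter_upwards [Filter.eventually_ge_atTop (0:ℝ)] with ρ hρ
      have h1 : ‖f ρ‖ = ρ * Real.exp ((cE c t x θ ρ).re) := by
        rw [hf]
        simp only [norm_mul, Complex.norm_real, Real.norm_eq_abs, Complex.norm_exp]
        rw [_root_.abs_of_nonneg hρ]
        simp [Complex.mul_re]
      rw [h1, Real.rpow_one]
      have hcos : 0 ≤ Real.cos (c * θ) := by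
        apply Real.cos_nonneg_of_mem_Icc
        constructor
        · nlinarith [mul_nonneg hc.le hθ0.le]
        · nlinarith [mul_nonneg hc.le hθ0.le]
      have hre : (cE c t x θ ρ).re ≤ -(x * Real.sin θ) * ρ := by
        rw [cE_re]
        nlinarith [mul_nonneg (mul_nonneg ht.le (Real.rpow_nonneg hρ c)) hcos]
      exact mul_le_mul_of_nonneg_left (Real.exp_le_exp.mpr hre) hρ
    · exact tendsto_rpow_mul_exp_neg_mul_atTop_nhds_zero 1 _ (by positivity)
  have hcont : ContinuousWithinAt f (Set.Ici 0) 0 := hfc.continuousWithinAt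
  have hderiv : ∀ ρ ∈ Set.Ioi (0:ℝ), HasDerivAt f (cD c t x θ ρ) ρ :=
    fun ρ hρ => hasDerivAt_cg_rho c t x θ hρ
  have h := integral_Ioi_of_hasDerivAt_of_tendsto hcont hderiv
    (integrable_cD hc hc1 ht hx ⟨hθ0.le, hθ2⟩) htend
  rw [h, hf]
  simp

noncomputable def cI (c t x θ : ℝ) : ℂ := ∫ ρ in Set.Ioi (0:ℝ), cg c t x θ ρ

set_option maxHeartbeats 1000000 in
lemma hasDerivAt_cI_zero {c t x : ℝ} (hc : 0 < c) (hc1 : c ≤ 1) (ht : 0 < t) (hx : 0 < x)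
    {θ₀ : ℝ} (hθ : θ₀ ∈ Set.Ioo 0 (Real.pi / 2)) :
    HasDerivAt (fun θ => cI c t x θ) 0 θ₀ := by
  obtain ⟨h0, h2⟩ := hθ
  set ε := min θ₀ (Real.pi / 2 - θ₀) with hεdef
  have hε : 0 < ε := lt_min h0 (by linarith)
  have hball : Metric.ball θ₀ ε ⊆ Set.Icc 0 (Real.pi / 2) := by
    intro y hy
    rw [Metric.mem_ball, Real.dist_eq] at hy
    have h3 := abs_lt.mp hy
    have h4 := min_le_left θ₀ (Real.pi / 2 - θ₀)
    have h5 := min_le_right θ₀ (Real.pi / 2 - θ₀)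
    constructor <;> [linarith; linarith]
  have hmeas : ∀ᶠ θ in nhds θ₀,
      AEStronglyMeasurable (fun ρ => cg c t x θ ρ) (volume.restrict (Set.Ioi 0)) :=
    Filter.Eventually.of_forall fun θ =>
      (continuous_cg_rho hc.le).aestronglyMeasurable.restrict
  have hint : Integrable (fun ρ => cg c t x θ₀ ρ) (volume.restrict (Set.Ioi 0)) :=
    integrable_cg hc hc1 ht hx ⟨h0.le, h2.le⟩
  have hmeas' : AEStronglyMeasurable (fun ρ => -Complex.I * cD c t x θ₀ ρ)
      (volume.restrict (Set.Ioi 0)) :=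
    (continuous_const.mul (continuous_cD_rho hc.le)).aestronglyMeasurable.restrict
  have hbound : ∀ᵐ ρ ∂(volume.restrict (Set.Ioi (0:ℝ))),
      ∀ θ ∈ Metric.ball θ₀ ε, ‖-Complex.I * cD c t x θ ρ‖ ≤ cB c t x ρ := by
    refine (ae_restrict_iff' measurableSet_Ioi).mpr
      (Filter.Eventually.of_forall fun ρ hρ θ hθ' => ?_)
    rw [norm_mul, norm_neg, Complex.norm_I, one_mul]
    exact norm_cD_le_cB hc hc1 ht hx (hball hθ') (le_of_lt hρ)
  have hbint : Integrable (cB c t x) (volume.restrict (Set.Ioi 0)) :=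
    cB_integrable hc hc1 ht hx
  have hdiff : ∀ᵐ ρ ∂(volume.restrict (Set.Ioi (0:ℝ))),
      ∀ θ ∈ Metric.ball θ₀ ε, HasDerivAt (fun θ => cg c t x θ ρ)
        (-Complex.I * cD c t x θ ρ) θ :=
    Filter.Eventually.of_forall fun ρ θ _ => hasDerivAt_cg_theta c t x ρ θ
  obtain ⟨-, H⟩ := hasDerivAt_integral_of_dominated_loc_of_deriv_le (Metric.ball_mem_nhds θ₀ hε) hmeas hint hmeas'
    hbound hbint hdiff
  have hzero : (∫ ρ in Set.Ioi (0:ℝ), -Complex.I * cD c t x θ₀ ρ) = 0 := by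
    rw [integral_const_mul, integral_cD_zero hc hc1 ht hx ⟨h0, h2.le⟩, mul_zero]
  rw [hzero] at H
  exact H

lemma continuousOn_cI {c t x : ℝ} (hc : 0 < c) (hc1 : c ≤ 1) (ht : 0 < t) (hx : 0 < x) :
    ContinuousOn (fun θ => cI c t x θ) (Set.Icc 0 (Real.pi / 2)) := by
  apply continuousOn_of_dominated (bound := cB c t x)
  · exact fun θ _ => (continuous_cg_rho hc.le).aestronglyMeasurable.restrict
  · intro θ hθ
    refine (ae_restrict_iff' measurableSet_Ioi).mpr
      (Filter.Eventually.of_forall fun ρ hρ => ?_)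
    exact norm_cg_le_cB hc hc1 ht hx hθ (le_of_lt hρ)
  · exact cB_integrable hc hc1 ht hx
  · exact Filter.Eventually.of_forall fun ρ => continuous_cg_theta.continuousOn

lemma cI_endpoints {c t x : ℝ} (hc : 0 < c) (hc1 : c ≤ 1) (ht : 0 < t) (hx : 0 < x) :
    cI c t x 0 = cI c t x (Real.pi / 2) := by
  have hpi := Real.pi_pos
  have hconst : ∀ δ ∈ Set.Ioc (0:ℝ) (Real.pi / 2), cI c t x (Real.pi / 2) = cI c t x δ := by
    intro δ hδ
    obtain ⟨hδ0, hδ2⟩ := hδ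
    have h := constant_of_has_deriv_right_zero (f := fun θ => cI c t x θ)
      (a := δ) (b := Real.pi / 2)
      ((continuousOn_cI hc hc1 ht hx).mono (Set.Icc_subset_Icc hδ0.le le_rfl))
      (fun y hy => (hasDerivAt_cI_zero hc hc1 ht hx
        ⟨lt_of_lt_of_le hδ0 hy.1, hy.2⟩).hasDerivWithinAt)
    exact h (Real.pi / 2) ⟨hδ2, le_rfl⟩
  have hne : (nhdsWithin (0:ℝ) (Set.Ioc 0 (Real.pi / 2))).NeBot := by
    rw [nhdsWithin_Ioc_eq_nhdsGT (by linarith : (0:ℝ) < Real.pi / 2)]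
    exact nhdsGT_neBot 0
  have h1 : Filter.Tendsto (fun θ => cI c t x θ) (nhdsWithin 0 (Set.Ioc 0 (Real.pi / 2)))
      (nhds (cI c t x 0)) :=
    ((continuousOn_cI hc hc1 ht hx) 0 ⟨le_rfl, by linarith⟩).mono Set.Ioc_subset_Icc_self
  have h2 : Filter.Tendsto (fun θ => cI c t x θ) (nhdsWithin 0 (Set.Ioc 0 (Real.pi / 2)))
      (nhds (cI c t x (Real.pi / 2))) := by
    apply Filter.Tendsto.congr' _ tendsto_const_nhds
    filter_upwards [self_mem_nhdsWithin] with θ hθ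
    exact hconst θ hθ
  exact tendsto_nhds_unique h1 h2

lemma cg_re (c t x θ ρ : ℝ) :
    (cg c t x θ ρ).re = Real.exp (-(t * ρ ^ c * Real.cos (c * θ)) - x * ρ * Real.sin θ) *
      Real.cos (t * ρ ^ c * Real.sin (c * θ) - x * ρ * Real.cos θ - θ) := by
  rw [cg, ← Complex.exp_add, Complex.exp_re]
  congr 1
  · rw [Complex.add_re, cE_re]
    simp
  · rw [Complex.add_im, cE_im]
    simp
    ring

lemma cg_re_zero (c t x ρ : ℝ) :
    (cg c t x 0 ρ).re = Real.exp (-(t * ρ ^ c)) * Real.cos (x * ρ) := by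
  rw [cg_re]
  simp [Real.cos_neg]

lemma cg_re_pi_half (c t x ρ : ℝ) :
    (cg c t x (Real.pi / 2) ρ).re
      = Real.exp (-(t * ρ ^ c * Real.cos (c * (Real.pi / 2)))) * Real.exp (-(x * ρ)) *
        Real.sin (t * ρ ^ c * Real.sin (c * (Real.pi / 2))) := by
  rw [cg_re, Real.sin_pi_div_two, Real.cos_pi_div_two]
  rw [show t * ρ ^ c * Real.sin (c * (Real.pi / 2)) - x * ρ * 0 - Real.pi / 2
      = t * ρ ^ c * Real.sin (c * (Real.pi / 2)) - Real.pi / 2 by ring]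
  rw [Real.cos_sub_pi_div_two, mul_one, ← Real.exp_add]
  ring_nf

/-- the contour-integral identity obtained by rotating the contour
by `-π/2`, together with absolute convergence of both integrals. -/
theorem contour_integral_identity
    (s t x : ℝ) (hs : 0 < s ∧ s ≤ 1/2) (ht : 0 < t) (hx : 0 < x) :
    IntegrableOn (fun ξ : ℝ => Real.exp (-t * ξ ^ (2*s)) * Real.cos (x * ξ))
      (Set.Ioi 0) ∧
    IntegrableOn (fun u : ℝ =>
        Real.exp (-t * (u / x) ^ (2*s) * Real.cos (Real.pi * s)) *
          Real.sin (t * (u / x) ^ (2*s) * Real.sin (Real.pi * s)) * Real.exp (-u))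
      (Set.Ioi 0) ∧
    (∫ ξ in Set.Ioi (0:ℝ), Real.exp (-t * ξ ^ (2*s)) * Real.cos (x * ξ)) =
      (1 / x) * ∫ u in Set.Ioi (0:ℝ),
        Real.exp (-t * (u / x) ^ (2*s) * Real.cos (Real.pi * s)) *
          Real.sin (t * (u / x) ^ (2*s) * Real.sin (Real.pi * s)) * Real.exp (-u) := by
  obtain ⟨hs0, hs2⟩ := hs
  have hpi := Real.pi_pos
  have hc : 0 < 2*s := by linarith
  have hc1 : 2*s ≤ 1 := by linarith
  have hπs : 2*s * (Real.pi/2) = Real.pi * s := by ring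
  -- Integrability of the first integrand
  have hg : IntegrableOn (fun ξ : ℝ => Real.exp (-t * ξ ^ (2*s))) (Set.Ioi 0) := by
    have h := integ_aux (q := 0) le_rfl hc ht
    exact h.congr_fun (fun ξ hξ => by beta_reduce; rw [Real.rpow_zero, one_mul]) measurableSet_Ioi
  have hmeas1 : Continuous (fun ξ : ℝ => Real.exp (-t * ξ ^ (2*s)) * Real.cos (x * ξ)) :=
    (Real.continuous_exp.comp (continuous_const.mul (continuous_rpow_c hc.le))).mul
      (Real.continuous_cos.comp (continuous_const.mul continuous_id))
  have hInt1 : IntegrableOn (fun ξ : ℝ => Real.exp (-t * ξ ^ (2*s)) * Real.cos (x * ξ))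
      (Set.Ioi 0) := by
    refine hg.mono' hmeas1.aestronglyMeasurable.restrict ?_
    refine Filter.Eventually.of_forall fun ξ => ?_
    rw [Real.norm_eq_abs, abs_mul, Real.abs_exp]
    have h := mul_le_mul_of_nonneg_left (Real.abs_cos_le_one (x*ξ))
      (Real.exp_pos (-t * ξ ^ (2*s))).le
    simpa using h
  -- Integrability of the second integrand
  set φ : ℝ → ℝ := fun u => Real.exp (-t * (u / x) ^ (2*s) * Real.cos (Real.pi * s)) *
      Real.sin (t * (u / x) ^ (2*s) * Real.sin (Real.pi * s)) * Real.exp (-u) with hφ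
  have hcos : 0 ≤ Real.cos (Real.pi * s) := by
    apply Real.cos_nonneg_of_mem_Icc
    constructor <;> nlinarith
  have hmeas2 : Continuous φ := by
    have h1 : Continuous (fun u : ℝ => (u / x) ^ (2*s)) :=
      (continuous_rpow_c hc.le).comp (continuous_id.div_const x)
    exact ((Real.continuous_exp.comp ((continuous_const.mul h1).mul continuous_const)).mul
      (Real.continuous_sin.comp ((continuous_const.mul h1).mul continuous_const))).mul
      (Real.continuous_exp.comp continuous_neg)
  have hInt2 : IntegrableOn φ (Set.Ioi 0) := by
    have he : IntegrableOn (fun u : ℝ => Real.exp (-u)) (Set.Ioi 0) := by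
      have h := exp_neg_integrableOn_Ioi (0:ℝ) (zero_lt_one)
      exact h.congr_fun (fun u hu => by norm_num) measurableSet_Ioi
    refine he.mono' hmeas2.aestronglyMeasurable.restrict ?_
    refine (ae_restrict_iff' measurableSet_Ioi).mpr
      (Filter.Eventually.of_forall fun u hu => ?_)
    have hux : (0:ℝ) < u / x := div_pos hu hx
    have h1 : Real.exp (-t * (u/x) ^ (2*s) * Real.cos (Real.pi*s)) ≤ 1 := by
      rw [Real.exp_le_one_iff]
      have hnn : 0 ≤ t * (u/x) ^ (2*s) * Real.cos (Real.pi*s) :=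
        mul_nonneg (mul_nonneg ht.le (Real.rpow_nonneg hux.le _)) hcos
      linarith
    have h2 := Real.abs_sin_le_one (t * (u/x) ^ (2*s) * Real.sin (Real.pi*s))
    rw [hφ, Real.norm_eq_abs]
    simp only []
    rw [abs_mul, abs_mul, Real.abs_exp, Real.abs_exp]
    have h3 : Real.exp (-t * (u/x) ^ (2*s) * Real.cos (Real.pi*s)) *
        |Real.sin (t * (u/x) ^ (2*s) * Real.sin (Real.pi*s))| ≤ 1 := by
      nlinarith [abs_nonneg (Real.sin (t * (u/x) ^ (2*s) * Real.sin (Real.pi*s))),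
        Real.exp_pos (-t * (u/x) ^ (2*s) * Real.cos (Real.pi*s))]
    calc Real.exp (-t * (u/x) ^ (2*s) * Real.cos (Real.pi*s)) *
        |Real.sin (t * (u/x) ^ (2*s) * Real.sin (Real.pi*s))| * Real.exp (-u)
        ≤ 1 * Real.exp (-u) := mul_le_mul_of_nonneg_right h3 (Real.exp_pos _).le
      _ = Real.exp (-u) := one_mul _
  -- The contour identity
  have hI0 : (∫ ξ in Set.Ioi (0:ℝ), Real.exp (-t * ξ ^ (2*s)) * Real.cos (x * ξ))
      = (cI (2*s) t x 0).re := by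
    calc (∫ ξ in Set.Ioi (0:ℝ), Real.exp (-t * ξ ^ (2*s)) * Real.cos (x * ξ))
        = ∫ ξ in Set.Ioi (0:ℝ), (cg (2*s) t x 0 ξ).re := by
          refine setIntegral_congr_fun measurableSet_Ioi fun ξ _ => ?_
          rw [cg_re_zero, neg_mul]
      _ = (cI (2*s) t x 0).re := by
          rw [cI]
          have h := integral_re (integrable_cg hc hc1 ht hx ⟨le_rfl, by linarith⟩)
          simpa using h
  have hmid := cI_endpoints hc hc1 ht hx
  have hI1 : (1/x) * (∫ u in Set.Ioi (0:ℝ), φ u) = (cI (2*s) t x (Real.pi/2)).re := by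
    have hsub := integral_comp_mul_left_Ioi φ 0 hx
    rw [mul_zero] at hsub
    rw [one_div, ← smul_eq_mul, ← hsub]
    calc (∫ ρ in Set.Ioi (0:ℝ), φ (x*ρ))
        = ∫ ρ in Set.Ioi (0:ℝ), (cg (2*s) t x (Real.pi/2) ρ).re := by
          refine setIntegral_congr_fun measurableSet_Ioi fun ρ _ => ?_
          rw [hφ]
          simp only []
          rw [mul_div_cancel_left₀ _ hx.ne', cg_re_pi_half, hπs]
          ring
      _ = (cI (2*s) t x (Real.pi/2)).re := by
          rw [cI]
          have h := integral_re (integrable_cg hc hc1 ht hx ⟨by linarith, le_rfl⟩)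
          simpa using h
  exact ⟨hInt1, hInt2, by rw [hI0, hmid, ← hI1]⟩
end

section
/- For every s ∈ (0, 1/2] and every t > 0, lim_{x→+∞} x^{1+2s} ∫₀^∞ e^{−t ξ^{2s}} cos(xξ) dξ = t · sin(πs) · ∫₀^∞ u^{2s} e^{−u} du = t · sin(πs) · Γ(1+2s). In particular the limit is strictly positive. -/
open MeasureTheory

open Real Complex Set Filter MeasureTheory Topology

namespace FHKT

noncomputable def EE (c t x θ r : ℝ) : ℂ :=
  Complex.exp ((θ:ℂ) * Complex.I) *
    Complex.exp (-(t : ℂ) * ((r ^ c : ℝ) : ℂ) * Complex.exp ((c:ℂ) * (θ:ℂ) * Complex.I)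
      + (x : ℂ) * (r : ℂ) * Complex.exp ((θ:ℂ) * Complex.I) * Complex.I)

noncomputable def GG (c t x θ r : ℝ) : ℂ :=
  (1 + (-(t:ℂ) * (c:ℂ) * ((r ^ c : ℝ) : ℂ) * Complex.exp ((c:ℂ) * (θ:ℂ) * Complex.I)
      + (x:ℂ) * (r:ℂ) * Complex.I * Complex.exp ((θ:ℂ) * Complex.I))) * EE c t x θ r

lemma norm_EE (c t x θ r : ℝ) :
    ‖EE c t x θ r‖ = Real.exp (-(t * r^c * Real.cos (c*θ)) - x * r * Real.sin θ) := by
  rw [EE, norm_mul]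
  rw [Complex.norm_exp, Complex.norm_exp]
  rw [← Real.exp_add]
  congr 1
  simp [Complex.exp_ofReal_mul_I_re, Complex.exp_ofReal_mul_I_im, Complex.mul_re, Complex.mul_im]
  rw [show ((c:ℂ) * (θ:ℂ)) = (((c*θ:ℝ)):ℂ) by push_cast; ring, Complex.exp_ofReal_mul_I_re]
  ring

lemma hasDerivAt_theta (c t x r : ℝ) (θ : ℝ) :
    HasDerivAt (fun θ' => EE c t x θ' r) (Complex.I * GG c t x θ r) θ := by
  have hoR : HasDerivAt (fun θ' : ℝ => (θ' : ℂ)) 1 θ := by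
    simpa using (hasDerivAt_id _).ofReal_comp
  have h1 : HasDerivAt (fun θ' : ℝ => (θ' : ℂ) * Complex.I) Complex.I θ := by
    simpa using hoR.mul_const Complex.I
  have h2 := h1.cexp
  have h3 : HasDerivAt (fun θ' : ℝ => (c:ℂ) * (θ':ℂ) * Complex.I) ((c:ℂ) * Complex.I) θ := by
    simpa [mul_assoc] using ((hoR.const_mul (c:ℂ)).mul_const Complex.I)
  have h4 := h3.cexp
  have h5 := (h4.const_mul (-(t:ℂ) * ((r ^ c : ℝ) : ℂ))).add
      ((h2.const_mul ((x:ℂ) * (r:ℂ))).mul_const Complex.I)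
  have h6 := (h2.mul (h5.cexp))
  convert h6 using 1
  · rfl
  · rfl
  simp only [GG, EE, Pi.add_apply]
  ring

lemma hasDerivAt_r (c t x θ : ℝ) {r : ℝ} (hc : 0 < c) (hr : 0 < r) :
    HasDerivAt (fun p : ℝ => (p:ℂ) * EE c t x θ p) (GG c t x θ r) r := by
  have hoR : HasDerivAt (fun p : ℝ => (p : ℂ)) 1 r := by
    simpa using (hasDerivAt_id _).ofReal_comp
  have hrpow : HasDerivAt (fun p : ℝ => p ^ c) (c * r ^ (c-1)) r :=
    Real.hasDerivAt_rpow_const (Or.inl hr.ne')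
  have hrpowC : HasDerivAt (fun p : ℝ => ((p ^ c : ℝ) : ℂ)) ((c * r ^ (c-1) : ℝ) : ℂ) r :=
    hrpow.ofReal_comp
  have hP := ((hrpowC.const_mul (-(t:ℂ))).mul_const (Complex.exp ((c:ℂ) * (θ:ℂ) * Complex.I))).add
      (((hoR.const_mul (x:ℂ)).mul_const (Complex.exp ((θ:ℂ) * Complex.I))).mul_const Complex.I)
  have h6 := hoR.mul ((hP.cexp).const_mul (Complex.exp ((θ:ℂ) * Complex.I)))
  have hmul : r * r ^ (c-1) = r ^ c := by
    have h := (Real.rpow_add hr 1 (c-1)).symm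
    rw [Real.rpow_one] at h
    rw [h]; norm_num
  have hrc : (r:ℂ) * ((c * r ^ (c-1) : ℝ) : ℂ) = (c:ℂ) * ((r ^ c : ℝ) : ℂ) := by
    norm_cast
    rw [← hmul]; ring
  convert h6 using 1
  · rfl
  · rfl
  simp only [GG, EE]
  linear_combination ((t:ℂ) * Complex.exp ((c:ℂ) * (θ:ℂ) * Complex.I) *
      (Complex.exp ((θ:ℂ) * Complex.I) *
        Complex.exp (-(t : ℂ) * ((r ^ c : ℝ) : ℂ) * Complex.exp ((c:ℂ) * (θ:ℂ) * Complex.I)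
      + (x : ℂ) * (r : ℂ) * Complex.exp ((θ:ℂ) * Complex.I) * Complex.I))) * hrc


lemma integrable_aux {q b : ℝ} (hq : -1 < q) (hb : 0 < b) :
    IntegrableOn (fun r : ℝ => r ^ q * Real.exp (-b * r)) (Ioi 0) := by
  have h := integrableOn_rpow_mul_exp_neg_mul_rpow (s := q) (p := 1) hq one_pos hb
  refine h.congr_fun (fun r hr => ?_) measurableSet_Ioi
  dsimp only
  rw [Real.rpow_one]

lemma integrable_rpow_exp {q c b : ℝ} (hq : -1 < q) (hc : 0 < c) (hb : 0 < b) :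
    IntegrableOn (fun r : ℝ => r ^ q * Real.exp (-b * r ^ c)) (Ioi 0) := by
  have hf : IntegrableOn (fun u : ℝ => u ^ ((q+1)/c - 1) * Real.exp (-b * u)) (Ioi 0) := by
    refine integrable_aux ?_ hb
    have : 0 < (q+1)/c := div_pos (by linarith) hc
    linarith
  have h2 := (integrableOn_Ioi_comp_rpow_iff'
      (fun u : ℝ => u ^ ((q+1)/c - 1) * Real.exp (-b * u)) hc.ne').mpr hf
  refine h2.congr_fun (fun r hr => ?_) measurableSet_Ioi
  have hr0 : (0:ℝ) < r := hr
  have h3 : (r ^ c) ^ ((q+1)/c - 1) = r ^ (q + 1 - c) := by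
    rw [← Real.rpow_mul hr0.le]
    congr 1
    field_simp
  dsimp only
  rw [smul_eq_mul, h3, ← mul_assoc, ← Real.rpow_add hr0]
  congr 2
  ring

lemma integrable_exp_rpow' {c b : ℝ} (hc : 0 < c) (hb : 0 < b) :
    IntegrableOn (fun r : ℝ => Real.exp (-b * r ^ c)) (Ioi 0) := by
  refine (integrable_rpow_exp (q := 0) (by norm_num) hc hb).congr_fun
    (fun r hr => ?_) measurableSet_Ioi
  dsimp only
  rw [Real.rpow_zero, one_mul]


lemma sin_mono {a b : ℝ} (h0 : 0 ≤ a) (hab : a ≤ b) (hb : b ≤ π/2) :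
    Real.sin a ≤ Real.sin b :=
  Real.sin_le_sin_of_le_of_le_pi_div_two (by linarith [Real.pi_pos]) hb hab

lemma cos_c_nonneg {c θ : ℝ} (hc : 0 < c) (hc1 : c ≤ 1) (hθ0 : 0 ≤ θ) (hθ1 : θ ≤ π/2) :
    0 ≤ Real.cos (c * θ) := by
  apply Real.cos_nonneg_of_mem_Icc
  constructor
  · nlinarith [Real.pi_pos]
  · nlinarith

lemma norm_EE_le {c t x θ r : ℝ} (hc : 0 < c) (hc1 : c ≤ 1) (ht : 0 ≤ t) (hx : 0 ≤ x)
    (hθ0 : 0 ≤ θ) (hθ1 : θ ≤ π/2) (hr : 0 ≤ r) :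
    ‖EE c t x θ r‖ ≤ Real.exp (-(x * Real.sin θ) * r) := by
  rw [norm_EE]
  apply Real.exp_le_exp.mpr
  have h1 : 0 ≤ t * r^c * Real.cos (c*θ) := by
    have := cos_c_nonneg hc hc1 hθ0 hθ1
    positivity
  nlinarith

lemma norm_EE_le_bound0 {c t x θ r : ℝ} (hc : 0 < c) (hc1 : c ≤ 1) (ht : 0 ≤ t) (hx : 0 ≤ x)
    (hθ0 : 0 ≤ θ) (hθ1 : θ ≤ π/2) (hr : 0 ≤ r) :
    ‖EE c t x θ r‖ ≤ Real.exp (-(t*(Real.sqrt 2/2)) * r^c) + Real.exp (-(x*(Real.sqrt 2/2)) * r) := by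
  have hs2 : Real.sqrt 2 / 2 = Real.cos (π/4) := by rw [Real.cos_pi_div_four]
  have hpi := Real.pi_pos
  rw [norm_EE]
  rcases le_or_gt θ (π/4) with hcase | hcase
  · have hcos : Real.sqrt 2/2 ≤ Real.cos (c*θ) := by
      rw [hs2]
      apply Real.cos_le_cos_of_nonneg_of_le_pi (by positivity) (by linarith)
      nlinarith
    have : Real.exp (-(t * r^c * Real.cos (c*θ)) - x * r * Real.sin θ)
        ≤ Real.exp (-(t*(Real.sqrt 2/2)) * r^c) := by
      apply Real.exp_le_exp.mpr
      have hsin : 0 ≤ Real.sin θ := Real.sin_nonneg_of_nonneg_of_le_pi hθ0 (by linarith)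
      have hrc : (0:ℝ) ≤ r ^ c := Real.rpow_nonneg hr c
      have k1 : t * r^c * (Real.sqrt 2/2) ≤ t * r^c * Real.cos (c*θ) :=
        mul_le_mul_of_nonneg_left hcos (by positivity)
      have k2 : 0 ≤ x * r * Real.sin θ := by positivity
      nlinarith
    have h2 : (0:ℝ) < Real.exp (-(x*(Real.sqrt 2/2)) * r) := Real.exp_pos _
    linarith
  · have hsin : Real.sqrt 2/2 ≤ Real.sin θ := by
      have := Real.sin_pi_div_four
      rw [← Real.sin_pi_div_four]
      exact sin_mono (by linarith) hcase.le hθ1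
    have : Real.exp (-(t * r^c * Real.cos (c*θ)) - x * r * Real.sin θ)
        ≤ Real.exp (-(x*(Real.sqrt 2/2)) * r) := by
      apply Real.exp_le_exp.mpr
      have h1 : 0 ≤ t * r^c * Real.cos (c*θ) := by
        have := cos_c_nonneg hc hc1 hθ0 hθ1
        have hrc : (0:ℝ) ≤ r ^ c := Real.rpow_nonneg hr c
        positivity
      have k1 : x * r * (Real.sqrt 2/2) ≤ x * r * Real.sin θ :=
        mul_le_mul_of_nonneg_left hsin (by positivity)
      nlinarith
    have h2 : (0:ℝ) < Real.exp (-(t*(Real.sqrt 2/2)) * r^c) := Real.exp_pos _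
    linarith

lemma norm_GG_le {c t x θ r : ℝ} (hc : 0 < c) (hc1 : c ≤ 1) (ht : 0 ≤ t) (hx : 0 ≤ x)
    (hθ0 : 0 ≤ θ) (hθ1 : θ ≤ π/2) (hr : 0 ≤ r) :
    ‖GG c t x θ r‖ ≤ (1 + t*c*r^c + x*r) * Real.exp (-(x * Real.sin θ) * r) := by
  rw [GG, norm_mul]
  have hrc : (0:ℝ) ≤ r ^ c := Real.rpow_nonneg hr c
  have h1 : ‖(1:ℂ) + (-(t:ℂ) * (c:ℂ) * ((r ^ c : ℝ) : ℂ) * Complex.exp ((c:ℂ) * (θ:ℂ) * Complex.I)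
      + (x:ℂ) * (r:ℂ) * Complex.I * Complex.exp ((θ:ℂ) * Complex.I))‖ ≤ 1 + t*c*r^c + x*r := by
    refine (norm_add_le _ _).trans ?_
    have h2 : ‖(-(t:ℂ) * (c:ℂ) * ((r ^ c : ℝ) : ℂ) * Complex.exp ((c:ℂ) * (θ:ℂ) * Complex.I)
        + (x:ℂ) * (r:ℂ) * Complex.I * Complex.exp ((θ:ℂ) * Complex.I))‖
        ≤ t*c*r^c + x*r := by
      refine (norm_add_le _ _).trans ?_
      have e1 : ‖Complex.exp ((c:ℂ) * (θ:ℂ) * Complex.I)‖ = 1 := by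
        rw [show ((c:ℂ) * (θ:ℂ)) = (((c*θ:ℝ)):ℂ) by push_cast; ring]
        exact Complex.norm_exp_ofReal_mul_I _
      have e2 : ‖Complex.exp ((θ:ℂ) * Complex.I)‖ = 1 := Complex.norm_exp_ofReal_mul_I _
      have n1 : ‖(-(t:ℂ) * (c:ℂ) * ((r ^ c : ℝ) : ℂ) * Complex.exp ((c:ℂ) * (θ:ℂ) * Complex.I))‖
          = t * c * r^c := by
        rw [norm_mul, e1, mul_one, norm_mul, norm_mul]
        simp only [norm_neg, Complex.norm_real, Real.norm_eq_abs]
        rw [_root_.abs_of_nonneg ht, _root_.abs_of_nonneg hc.le, _root_.abs_of_nonneg hrc]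
      have n2 : ‖(x:ℂ) * (r:ℂ) * Complex.I * Complex.exp ((θ:ℂ) * Complex.I)‖ = x * r := by
        rw [norm_mul, e2, mul_one, norm_mul, norm_mul]
        simp only [Complex.norm_real, Real.norm_eq_abs, Complex.norm_I, mul_one]
        rw [_root_.abs_of_nonneg hx, _root_.abs_of_nonneg hr]
      rw [n1, n2]
    simp only [norm_one]
    linarith
  have h3 := norm_EE_le hc hc1 ht hx hθ0 hθ1 hr
  have h4 : (0:ℝ) ≤ ‖EE c t x θ r‖ := norm_nonneg _
  have h5 : (0:ℝ) ≤ 1 + t*c*r^c + x*r := by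
    nlinarith [mul_nonneg (mul_nonneg ht hc.le) hrc, mul_nonneg hx hr]
  exact mul_le_mul h1 h3 h4 h5

lemma continuous_rpow_of_pos {c : ℝ} (hc : 0 < c) : Continuous (fun r : ℝ => r ^ c) := by
  rw [continuous_iff_continuousAt]
  intro r
  exact Real.continuousAt_rpow_const r c (Or.inr hc.le)

lemma continuous_EE_r {c : ℝ} (t x θ : ℝ) (hc : 0 < c) :
    Continuous (fun r : ℝ => EE c t x θ r) := by
  unfold EE
  apply Continuous.mul continuous_const
  apply Complex.continuous_exp.comp
  apply Continuous.add
  · exact (continuous_const.mul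
      (Complex.continuous_ofReal.comp (continuous_rpow_of_pos hc))).mul continuous_const
  · exact ((continuous_const.mul Complex.continuous_ofReal).mul continuous_const).mul
      continuous_const

lemma continuous_EE_theta {c : ℝ} (t x r : ℝ) :
    Continuous (fun θ : ℝ => EE c t x θ r) := by
  unfold EE
  have hexp : Continuous (fun θ : ℝ => Complex.exp ((θ:ℂ) * Complex.I)) :=
    Complex.continuous_exp.comp (Complex.continuous_ofReal.mul continuous_const)
  have hexp2 : Continuous (fun θ : ℝ => Complex.exp ((c:ℂ) * (θ:ℂ) * Complex.I)) :=
    Complex.continuous_exp.comp ((continuous_const.mul Complex.continuous_ofReal).mul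
      continuous_const)
  apply hexp.mul
  apply Complex.continuous_exp.comp
  exact ((continuous_const.mul hexp2)).add ((continuous_const.mul hexp).mul continuous_const)

lemma continuous_GG_r {c : ℝ} (t x θ : ℝ) (hc : 0 < c) :
    Continuous (fun r : ℝ => GG c t x θ r) := by
  unfold GG
  refine Continuous.mul ?_ (continuous_EE_r t x θ hc)
  apply continuous_const.add
  apply Continuous.add
  · exact (continuous_const.mul
      (Complex.continuous_ofReal.comp (continuous_rpow_of_pos hc))).mul continuous_const
  · exact ((continuous_const.mul Complex.continuous_ofReal).mul continuous_const).mul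
      continuous_const

lemma integrable_bound0 {c t x : ℝ} (hc : 0 < c) (ht : 0 < t) (hx : 0 < x) :
    IntegrableOn (fun r : ℝ => Real.exp (-(t*(Real.sqrt 2/2)) * r^c)
      + Real.exp (-(x*(Real.sqrt 2/2)) * r)) (Ioi 0) := by
  have h2 : (0:ℝ) < Real.sqrt 2 / 2 := by positivity
  refine (integrable_exp_rpow' hc (by positivity)).add ?_
  exact exp_neg_integrableOn_Ioi 0 (by positivity)

lemma integrableOn_EE {c t x θ : ℝ} (hc : 0 < c) (hc1 : c ≤ 1) (ht : 0 < t) (hx : 0 < x)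
    (hθ0 : 0 ≤ θ) (hθ1 : θ ≤ π/2) :
    IntegrableOn (fun r => EE c t x θ r) (Ioi 0) := by
  refine Integrable.mono' (integrable_bound0 hc ht hx)
    ((continuous_EE_r t x θ hc).aestronglyMeasurable.restrict) ?_
  refine (ae_restrict_iff' measurableSet_Ioi).mpr (ae_of_all _ (fun r hr => ?_))
  exact norm_EE_le_bound0 hc hc1 ht.le hx.le hθ0 hθ1 (le_of_lt hr)

lemma integrable_poly_exp {c t x m : ℝ} (hc : 0 < c) (hm : 0 < m) :
    IntegrableOn (fun r : ℝ => (1 + t*c*r^c + x*r) * Real.exp (-m * r)) (Ioi 0) := by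
    have e1 : IntegrableOn (fun r : ℝ => Real.exp (-m * r)) (Ioi 0) :=
      exp_neg_integrableOn_Ioi 0 hm
    have e2 : IntegrableOn (fun r : ℝ => r ^ c * Real.exp (-m * r)) (Ioi 0) :=
      integrable_aux (by linarith) hm
    have e3 : IntegrableOn (fun r : ℝ => r ^ (1:ℝ) * Real.exp (-m * r)) (Ioi 0) :=
      integrable_aux (by norm_num) hm
    have e3' : IntegrableOn (fun r : ℝ => r * Real.exp (-m * r)) (Ioi 0) := by
      refine e3.congr_fun (fun r hr => ?_) measurableSet_Ioi
      dsimp only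
      rw [Real.rpow_one]
    have hadd : IntegrableOn (fun r : ℝ => Real.exp (-m * r)
        + (t*c*(r ^ c * Real.exp (-m * r))
          + x*(r * Real.exp (-m * r)))) (Ioi 0) :=
      e1.add ((e2.const_mul (t*c)).add (e3'.const_mul x))
    refine hadd.congr_fun (fun r hr => ?_) measurableSet_Ioi
    ring

lemma integrableOn_GG {c t x θ : ℝ} (hc : 0 < c) (hc1 : c ≤ 1) (ht : 0 < t) (hx : 0 < x)
    (hθ0 : 0 < θ) (hθ1 : θ ≤ π/2) :
    IntegrableOn (fun r => GG c t x θ r) (Ioi 0) := by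
  have hpi := Real.pi_pos
  have hsin : 0 < Real.sin θ := Real.sin_pos_of_pos_of_lt_pi hθ0 (by linarith)
  have hm : 0 < x * Real.sin θ := by positivity
  have hint := integrable_poly_exp (t := t) (x := x) hc hm

  refine Integrable.mono' hint
    ((continuous_GG_r t x θ hc).aestronglyMeasurable.restrict) ?_
  refine (ae_restrict_iff' measurableSet_Ioi).mpr (ae_of_all _ (fun r hr => ?_))
  exact norm_GG_le hc hc1 ht.le hx.le hθ0.le hθ1 (le_of_lt hr)


lemma integral_GG_zero {c t x θ : ℝ} (hc : 0 < c) (hc1 : c ≤ 1) (ht : 0 < t) (hx : 0 < x)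
    (hθ0 : 0 < θ) (hθ1 : θ ≤ π/2) :
    ∫ r in Ioi (0:ℝ), GG c t x θ r = 0 := by
  have hpi := Real.pi_pos
  have hsin : 0 < Real.sin θ := Real.sin_pos_of_pos_of_lt_pi hθ0 (by linarith)
  have hm : 0 < x * Real.sin θ := by positivity
  have key := integral_Ioi_of_hasDerivAt_of_tendsto
    (f := fun p : ℝ => (p:ℂ) * EE c t x θ p) (f' := fun r => GG c t x θ r) (a := 0) (m := 0)
    ?_ ?_ ?_ ?_
  · rw [key]
    simp [EE]
  · exact ((Complex.continuous_ofReal.mul (continuous_EE_r t x θ hc)).continuousAt).continuousWithinAt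
  · exact fun r hr => hasDerivAt_r c t x θ hc hr
  · exact integrableOn_GG hc hc1 ht hx hθ0 hθ1
  · have hb : Tendsto (fun r : ℝ => r ^ (1:ℝ) * Real.exp (-(x * Real.sin θ) * r)) atTop (𝓝 0) :=
      tendsto_rpow_mul_exp_neg_mul_atTop_nhds_zero 1 _ hm
    apply squeeze_zero_norm' _ hb
    filter_upwards [eventually_ge_atTop (0:ℝ)] with r hr
    rw [norm_mul, Real.rpow_one]
    have h1 : ‖(r:ℂ)‖ = r := by
      simp only [Complex.norm_real, Real.norm_eq_abs]
      exact _root_.abs_of_nonneg hr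
    rw [h1]
    exact mul_le_mul_of_nonneg_left (norm_EE_le hc hc1 ht.le hx.le hθ0.le hθ1 hr) hr

noncomputable def Φ (c t x : ℝ) : ℝ → ℂ := fun θ => ∫ r in Ioi (0:ℝ), EE c t x θ r

lemma hasDerivAt_phi {c t x θ : ℝ} (hc : 0 < c) (hc1 : c ≤ 1) (ht : 0 < t) (hx : 0 < x)
    (hθ : θ ∈ Ioo 0 (π/2)) :
    HasDerivAt (Φ c t x) 0 θ := by
  have hpi := Real.pi_pos
  obtain ⟨hθ0, hθ1⟩ := hθ
  set ε := min θ (π/2 - θ) / 2 with hε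
  have hmin1 := min_le_left θ (π/2 - θ)
  have hmin2 := min_le_right θ (π/2 - θ)
  have hε0 : 0 < ε := by
    apply div_pos _ (by norm_num)
    exact lt_min hθ0 (by linarith)
  have hεθ : 0 < θ - ε := by rw [hε]; linarith
  have hεπ : θ + ε < π/2 := by rw [hε]; linarith
  have hsinpos : 0 < Real.sin (θ - ε) := Real.sin_pos_of_pos_of_lt_pi hεθ (by linarith)
  have key := hasDerivAt_integral_of_dominated_loc_of_deriv_le
    (μ := volume.restrict (Ioi 0))
    (F := fun θ' r => EE c t x θ' r) (F' := fun θ' r => Complex.I * GG c t x θ' r)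
    (x₀ := θ) (s := Metric.ball θ ε)
    (bound := fun r => (1 + t*c*r^c + x*r) * Real.exp (-(x * Real.sin (θ - ε)) * r))
    (Metric.ball_mem_nhds θ hε0)
    (Eventually.of_forall fun θ' => (continuous_EE_r t x θ' hc).aestronglyMeasurable.restrict)
    (integrableOn_EE hc hc1 ht hx hθ0.le hθ1.le)
    ((continuous_const.mul (continuous_GG_r t x θ hc)).aestronglyMeasurable.restrict)
    ?_ ?_ ?_
  · have hz : (∫ r in Ioi (0:ℝ), Complex.I * GG c t x θ r) = 0 := by
      have h2 : (∫ r in Ioi (0:ℝ), Complex.I • GG c t x θ r)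
          = Complex.I • ∫ r in Ioi (0:ℝ), GG c t x θ r := integral_smul _ _
      simp only [smul_eq_mul] at h2
      rw [h2, integral_GG_zero hc hc1 ht hx hθ0 hθ1.le, mul_zero]
    have := key.2
    rw [hz] at this
    exact this
  · refine (ae_restrict_iff' measurableSet_Ioi).mpr (ae_of_all _ (fun r hr => ?_))
    intro θ' hθ'
    have hd : |θ' - θ| < ε := by
      rw [← Real.dist_eq]
      exact Metric.mem_ball.mp hθ'
    have h1 : θ - ε < θ' := by
      have := abs_lt.mp hd
      linarith [this.1]
    have h2 : θ' < θ + ε := by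
      have := abs_lt.mp hd
      linarith [this.2]
    have hθ'0 : 0 < θ' := by linarith
    have hθ'1 : θ' ≤ π/2 := by linarith
    rw [norm_mul, Complex.norm_I, one_mul]
    refine (norm_GG_le hc hc1 ht.le hx.le hθ'0.le hθ'1 (le_of_lt hr)).trans ?_
    have hsins : Real.sin (θ - ε) ≤ Real.sin θ' := sin_mono hεθ.le h1.le hθ'1
    have hrc : (0:ℝ) ≤ r ^ c := Real.rpow_nonneg (le_of_lt hr) c
    have hfac : (0:ℝ) ≤ 1 + t*c*r^c + x*r := by
      nlinarith [mul_nonneg (mul_nonneg ht.le hc.le) hrc,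
        mul_nonneg hx.le (le_of_lt (show (0:ℝ) < r from hr))]
    apply mul_le_mul_of_nonneg_left _ hfac
    apply Real.exp_le_exp.mpr
    have k1 : x * Real.sin (θ - ε) ≤ x * Real.sin θ' := mul_le_mul_of_nonneg_left hsins hx.le
    have k2 := mul_le_mul_of_nonneg_right k1 (le_of_lt (show (0:ℝ) < r from hr))
    linarith
  · exact integrable_poly_exp hc (by positivity)
  · refine (ae_restrict_iff' measurableSet_Ioi).mpr (ae_of_all _ (fun r hr => ?_))
    intro θ' _
    exact hasDerivAt_theta c t x r θ'

lemma continuousOn_phi {c t x : ℝ} (hc : 0 < c) (hc1 : c ≤ 1) (ht : 0 < t) (hx : 0 < x) :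
    ContinuousOn (Φ c t x) (Icc 0 (π/2)) := by
  intro θ₀ hθ₀
  have := tendsto_integral_filter_of_dominated_convergence
    (μ := volume.restrict (Ioi 0))
    (F := fun θ r => EE c t x θ r) (f := fun r => EE c t x θ₀ r)
    (l := 𝓝[Icc (0:ℝ) (π/2)] θ₀)
    (bound := fun r => Real.exp (-(t*(Real.sqrt 2/2)) * r^c)
      + Real.exp (-(x*(Real.sqrt 2/2)) * r))
    (Eventually.of_forall fun θ' => (continuous_EE_r t x θ' hc).aestronglyMeasurable.restrict)
    ?_ (integrable_bound0 hc ht hx) ?_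
  · exact this
  · filter_upwards [eventually_mem_nhdsWithin] with θ' hθ'
    refine (ae_restrict_iff' measurableSet_Ioi).mpr (ae_of_all _ (fun r hr => ?_))
    exact norm_EE_le_bound0 hc hc1 ht.le hx.le hθ'.1 hθ'.2 (le_of_lt hr)
  · refine ae_of_all _ (fun r => ?_)
    exact ((continuous_EE_theta t x r).tendsto θ₀).mono_left nhdsWithin_le_nhds

lemma phi_const {c t x : ℝ} (hc : 0 < c) (hc1 : c ≤ 1) (ht : 0 < t) (hx : 0 < x) :
    Φ c t x 0 = Φ c t x (π/2) := by
  have hpi := Real.pi_pos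
  have hcont := continuousOn_phi hc hc1 ht hx
  have hconst : ∀ y ∈ Ioo (0:ℝ) (π/2), Φ c t x y = Φ c t x (π/2) := by
    intro y hy
    have hsub : Icc y (π/2) ⊆ Icc 0 (π/2) := fun z hz => ⟨le_trans hy.1.le hz.1, hz.2⟩
    have h := constant_of_has_deriv_right_zero (f := Φ c t x) (a := y) (b := π/2)
      (hcont.mono hsub) (fun z hz =>
        (hasDerivAt_phi hc hc1 ht hx ⟨lt_of_lt_of_le hy.1 hz.1, hz.2⟩).hasDerivWithinAt)
    exact (h (π/2) ⟨hy.2.le, le_rfl⟩).symm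
  have hne : (𝓝[Ioo (0:ℝ) (π/2)] 0).NeBot := by
    apply mem_closure_iff_nhdsWithin_neBot.mp
    rw [closure_Ioo (show (0:ℝ) ≠ π/2 from ne_of_lt (by linarith))]
    exact ⟨le_rfl, by linarith⟩
  have h1 : Tendsto (Φ c t x) (𝓝[Ioo (0:ℝ) (π/2)] 0) (𝓝 (Φ c t x 0)) :=
    (hcont 0 ⟨le_rfl, by linarith⟩).mono_left
      (nhdsWithin_mono 0 (fun z hz => ⟨hz.1.le, hz.2.le⟩))
  have h2 : Tendsto (Φ c t x) (𝓝[Ioo (0:ℝ) (π/2)] 0) (𝓝 (Φ c t x (π/2))) := by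
    apply Tendsto.congr' _ tendsto_const_nhds
    filter_upwards [self_mem_nhdsWithin] with y hy
    exact (hconst y hy).symm
  exact tendsto_nhds_unique h1 h2


noncomputable def AA (c : ℝ) : ℂ := Complex.exp ((c:ℂ) * ((π/2 : ℝ):ℂ) * Complex.I)

lemma norm_AA (c : ℝ) : ‖AA c‖ = 1 := by
  rw [AA, show ((c:ℂ) * ((π/2 : ℝ):ℂ)) = (((c*(π/2):ℝ)):ℂ) by push_cast; ring]
  exact Complex.norm_exp_ofReal_mul_I _

lemma re_AA_nonneg {c : ℝ} (hc : 0 < c) (hc1 : c ≤ 1) : 0 ≤ (AA c).re := by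
  have hpi := Real.pi_pos
  rw [AA, show ((c:ℂ) * ((π/2 : ℝ):ℂ)) = (((c*(π/2):ℝ)):ℂ) by push_cast; ring,
    Complex.exp_ofReal_mul_I_re]
  apply Real.cos_nonneg_of_mem_Icc
  constructor <;> nlinarith

lemma im_AA (c : ℝ) : (AA c).im = Real.sin (c * (π/2)) := by
  rw [AA, show ((c:ℂ) * ((π/2 : ℝ):ℂ)) = (((c*(π/2):ℝ)):ℂ) by push_cast; ring,
    Complex.exp_ofReal_mul_I_im]

lemma phi_zero_re {c t x : ℝ} (hc : 0 < c) (hc1 : c ≤ 1) (ht : 0 < t) (hx : 0 < x) :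
    (Φ c t x 0).re = ∫ r in Ioi (0:ℝ), Real.exp (-t * r^c) * Real.cos (x*r) := by
  have hpi := Real.pi_pos
  rw [Φ]
  have h := integral_re (μ := volume.restrict (Ioi 0)) (f := fun r => EE c t x 0 r)
    (integrableOn_EE hc hc1 ht hx le_rfl (by linarith))
  simp only [RCLike.re_to_complex] at h
  rw [← h]
  refine setIntegral_congr_fun measurableSet_Ioi (fun r hr => ?_)
  simp only [EE, Complex.ofReal_zero, zero_mul, mul_zero, Complex.exp_zero, one_mul, mul_one]
  rw [Complex.exp_re]
  congr 1
  · congr 1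
    simp [Complex.add_re, Complex.mul_re]
  · congr 1
    simp [Complex.add_im, Complex.mul_im]

lemma phi_pi_eq {c t x : ℝ} : Φ c t x (π/2) = Complex.I *
    ∫ r in Ioi (0:ℝ), Complex.exp (-(t:ℂ) * AA c * ((r^c : ℝ):ℂ) - ((x*r : ℝ):ℂ)) := by
  have hpoint : ∀ r : ℝ, EE c t x (π/2) r
      = Complex.I * Complex.exp (-(t:ℂ) * AA c * ((r^c : ℝ):ℂ) - ((x*r : ℝ):ℂ)) := by
    intro r
    have e1 : Complex.exp ((((π/2 : ℝ)):ℂ) * Complex.I) = Complex.I := by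
      rw [Complex.exp_mul_I, ← Complex.ofReal_cos, ← Complex.ofReal_sin,
        Real.cos_pi_div_two, Real.sin_pi_div_two]
      simp
    rw [EE, AA, e1]
    congr 1
    congr 1
    push_cast
    linear_combination (x:ℂ) * (r:ℂ) * Complex.I_mul_I
  rw [Φ]
  calc ∫ r in Ioi (0:ℝ), EE c t x (π/2) r
      = ∫ r in Ioi (0:ℝ), Complex.I •
          Complex.exp (-(t:ℂ) * AA c * ((r^c : ℝ):ℂ) - ((x*r : ℝ):ℂ)) := by
        refine setIntegral_congr_fun measurableSet_Ioi (fun r hr => ?_)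
        rw [hpoint r, smul_eq_mul]
    _ = Complex.I * ∫ r in Ioi (0:ℝ),
          Complex.exp (-(t:ℂ) * AA c * ((r^c : ℝ):ℂ) - ((x*r : ℝ):ℂ)) := by
        rw [integral_smul, smul_eq_mul]

noncomputable def ψ (c t x : ℝ) (u : ℝ) : ℂ :=
  ((x^c : ℝ):ℂ) * (Complex.exp (-(t:ℂ) * AA c * ((u^c / x^c : ℝ):ℂ)) - 1)
    * Complex.exp (-(u:ℂ))

lemma norm_psi_le {c t x u : ℝ} (hc : 0 < c) (hc1 : c ≤ 1) (ht : 0 < t) (hx : 0 < x)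
    (hu : 0 < u) : ‖ψ c t x u‖ ≤ 2 * t * u^c * Real.exp (-u) := by
  have hxc : (0:ℝ) < x^c := Real.rpow_pos_of_pos hx c
  have huc : (0:ℝ) < u^c := Real.rpow_pos_of_pos hu c
  set w : ℂ := -(t:ℂ) * AA c * ((u^c / x^c : ℝ):ℂ) with hw
  have hnw : ‖w‖ = t * (u^c / x^c) := by
    rw [hw, norm_mul, norm_mul, norm_AA, mul_one]
    simp only [norm_neg, Complex.norm_real, Real.norm_eq_abs]
    rw [_root_.abs_of_nonneg ht.le, _root_.abs_of_nonneg (by positivity : (0:ℝ) ≤ u^c / x^c)]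
  have hrew : w.re ≤ 0 := by
    rw [hw]
    have : (-(t:ℂ) * AA c * ((u^c / x^c : ℝ):ℂ)).re
        = -(t * (u^c/x^c)) * (AA c).re := by
      simp [Complex.mul_re, Complex.mul_im]
      ring
    rw [this]
    have h6 := re_AA_nonneg hc hc1
    have h7 := mul_nonneg (mul_nonneg ht.le (div_pos huc hxc).le) h6
    nlinarith
  have hne : ‖Complex.exp (-(u:ℂ))‖ = Real.exp (-u) := by
    rw [Complex.norm_exp]
    norm_num
  rw [ψ, norm_mul, norm_mul, hne]
  have hnx : ‖((x^c : ℝ):ℂ)‖ = x^c := by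
    simp only [Complex.norm_real, Real.norm_eq_abs]
    exact _root_.abs_of_nonneg hxc.le
  rw [hnx]
  rcases le_or_gt ‖w‖ 1 with hcase | hcase
  · have h1 : ‖Complex.exp w - 1‖ ≤ 2 * (t * (u^c/x^c)) := by
      rw [← hnw]
      exact Complex.norm_exp_sub_one_le hcase
    have := mul_le_mul_of_nonneg_left h1 hxc.le
    calc x^c * ‖Complex.exp w - 1‖ * Real.exp (-u)
        ≤ x^c * (2 * (t * (u^c/x^c))) * Real.exp (-u) := by
          exact mul_le_mul_of_nonneg_right this (Real.exp_pos _).le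
      _ = 2 * t * u^c * Real.exp (-u) := by field_simp
  · have h1 : ‖Complex.exp w - 1‖ ≤ 2 := by
      refine (norm_sub_le _ _).trans ?_
      rw [Complex.norm_exp, norm_one]
      have := Real.exp_le_one_iff.mpr hrew
      linarith
    have h2 : x^c ≤ t * u^c := by
      have h3 : 1 < t * (u^c/x^c) := by rw [← hnw]; exact hcase
      have h5 := mul_lt_mul_of_pos_right h3 hxc
      rw [one_mul, mul_assoc, div_mul_cancel₀ _ hxc.ne'] at h5
      linarith
    calc x^c * ‖Complex.exp w - 1‖ * Real.exp (-u)
        ≤ (t * u^c) * 2 * Real.exp (-u) := by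
          apply mul_le_mul_of_nonneg_right _ (Real.exp_pos _).le
          nlinarith [norm_nonneg (Complex.exp w - 1)]
      _ = 2 * t * u^c * Real.exp (-u) := by ring

lemma continuous_psi {c t x : ℝ} (hc : 0 < c) : Continuous (ψ c t x) := by
  unfold ψ
  apply Continuous.mul
  apply Continuous.mul continuous_const
  · apply Continuous.sub _ continuous_const
    apply Complex.continuous_exp.comp
    exact continuous_const.mul (Complex.continuous_ofReal.comp
      ((continuous_rpow_of_pos hc).div_const _))
  · exact Complex.continuous_exp.comp Complex.continuous_ofReal.neg

lemma integrable_bound1 {c t : ℝ} (hc : 0 < c) (ht : 0 < t) :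
    IntegrableOn (fun u : ℝ => 2 * t * u^c * Real.exp (-u)) (Ioi 0) := by
  have h := (integrable_aux (q := c) (b := 1) (by linarith) one_pos).const_mul (2*t)
  have h2 : IntegrableOn (fun u : ℝ => 2*t*(u ^ c * Real.exp (-1 * u))) (Ioi 0) := h
  refine h2.congr_fun (fun u hu => ?_) measurableSet_Ioi
  norm_num
  ring

lemma integrable_psi {c t x : ℝ} (hc : 0 < c) (hc1 : c ≤ 1) (ht : 0 < t) (hx : 0 < x) :
    IntegrableOn (ψ c t x) (Ioi 0) := by
  refine Integrable.mono' (integrable_bound1 hc ht)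
    ((continuous_psi hc).aestronglyMeasurable.restrict) ?_
  refine (ae_restrict_iff' measurableSet_Ioi).mpr (ae_of_all _ (fun u hu => ?_))
  exact norm_psi_le hc hc1 ht hx hu


lemma integrable_cexp_neg : IntegrableOn (fun u : ℝ => Complex.exp (-(u:ℂ))) (Ioi 0) := by
  have h : IntegrableOn (fun u : ℝ => Real.exp (-1 * u)) (Ioi 0) :=
    exp_neg_integrableOn_Ioi 0 one_pos
  have h2 : IntegrableOn (fun u : ℝ => ((Real.exp (-1*u) : ℝ) : ℂ)) (Ioi 0) :=
    h.ofReal (𝕜 := ℂ)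
  refine h2.congr_fun (fun u hu => ?_) measurableSet_Ioi
  rw [show -(u:ℂ) = ((-u : ℝ) : ℂ) by push_cast; ring, ← Complex.ofReal_exp]
  norm_num

lemma gamma_int {c : ℝ} (hc : 0 < c) :
    ∫ u in Ioi (0:ℝ), u ^ c * Real.exp (-u) = Real.Gamma (1+c) := by
  rw [Real.Gamma_eq_integral (by linarith : (0:ℝ) < 1 + c)]
  refine setIntegral_congr_fun measurableSet_Ioi (fun u hu => ?_)
  rw [show (1 + c - 1) = c by ring]
  ring

lemma integral_limit_fn {c t : ℝ} (hc : 0 < c) :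
    ∫ u in Ioi (0:ℝ), (-(t:ℂ) * AA c * ((u^c : ℝ):ℂ) * Complex.exp (-(u:ℂ)))
      = -(t:ℂ) * AA c * ((Real.Gamma (1+c) : ℝ):ℂ) := by
  have h1 : ∀ u : ℝ, 0 < u → -(t:ℂ) * AA c * ((u^c : ℝ):ℂ) * Complex.exp (-(u:ℂ))
      = (-(t:ℂ) * AA c) • (((u^c * Real.exp (-u) : ℝ)):ℂ) := by
    intro u hu
    rw [smul_eq_mul, show -(u:ℂ) = ((-u : ℝ) : ℂ) by push_cast; ring, ← Complex.ofReal_exp]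
    push_cast
    ring
  rw [setIntegral_congr_fun measurableSet_Ioi (fun u hu => h1 u hu)]
  rw [integral_smul]
  have h2 := integral_ofReal (𝕜 := ℂ) (f := fun a : ℝ => a^c * Real.exp (-a))
    (μ := volume.restrict (Ioi 0))
  rw [show (∫ a in Ioi (0:ℝ), ((a^c * Real.exp (-a) : ℝ) : ℂ))
      = (((∫ a in Ioi (0:ℝ), a^c * Real.exp (-a) : ℝ)) : ℂ) from h2, gamma_int hc, smul_eq_mul]

lemma psi_tendsto {c t x₀ u : ℝ} (hc : 0 < c) (ht : 0 < t) (hu : 0 < u) :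
    Tendsto (fun x : ℝ => ψ c t x u) atTop
      (𝓝 (-(t:ℂ) * AA c * ((u^c : ℝ):ℂ) * Complex.exp (-(u:ℂ)))) := by
  set q : ℂ := -(t:ℂ) * AA c * ((u^c : ℝ):ℂ) with hq
  have hd : HasDerivAt (fun ε : ℝ => Complex.exp (q * (ε:ℂ))) q 0 := by
    have hoR : HasDerivAt (fun ε : ℝ => (ε : ℂ)) 1 0 := by
      simpa using (hasDerivAt_id _).ofReal_comp
    have := (hoR.const_mul q).cexp
    simpa using this
  have hslope := hasDerivAt_iff_tendsto_slope.mp hd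
  have hxc : Tendsto (fun x : ℝ => (x^c)⁻¹) atTop (𝓝[≠] 0) := by
    apply tendsto_nhdsWithin_of_tendsto_nhds_of_eventually_within
    · exact (tendsto_rpow_atTop hc).inv_tendsto_atTop
    · filter_upwards [eventually_gt_atTop (0:ℝ)] with x hx
      have : (0:ℝ) < x^c := Real.rpow_pos_of_pos hx c
      simp only [Set.mem_compl_iff, Set.mem_singleton_iff]
      positivity
  have hcomp := (hslope.comp hxc).mul
    (tendsto_const_nhds (x := Complex.exp (-(u:ℂ))))
  refine Tendsto.congr' ?_ hcomp
  filter_upwards [eventually_gt_atTop (0:ℝ)] with x hx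
  simp only [Function.comp_apply]
  have e0 : q * ((((x^c)⁻¹ : ℝ)):ℂ) = -(t:ℂ) * AA c * ((u^c / x^c : ℝ):ℂ) := by
    rw [hq]; push_cast; ring
  rw [slope_def_module, sub_zero, inv_inv, Complex.ofReal_zero, mul_zero, Complex.exp_zero,
    e0, ψ, Complex.real_smul]


lemma key_id {c t x : ℝ} (hc : 0 < c) (hc1 : c ≤ 1) (ht : 0 < t) (hx : 0 < x) :
    x^(1+c) * ∫ r in Ioi (0:ℝ), Real.exp (-t * r^c) * Real.cos (x*r)
      = (Complex.I * ∫ u in Ioi (0:ℝ), ψ c t x u).re := by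
  have hxc : (0:ℝ) < x^c := Real.rpow_pos_of_pos hx c
  rw [← phi_zero_re hc hc1 ht hx, phi_const hc hc1 ht hx, phi_pi_eq]
  set G : ℝ → ℂ := fun u => Complex.exp (-(t:ℂ) * AA c * ((u^c/x^c : ℝ):ℂ) - ((u:ℝ):ℂ)) with hG
  have hsub : (∫ r in Ioi (0:ℝ), Complex.exp (-(t:ℂ) * AA c * ((r^c:ℝ):ℂ) - ((x*r:ℝ):ℂ)))
      = x⁻¹ • ∫ u in Ioi (0:ℝ), G u := by
    have h := integral_comp_mul_left_Ioi (g := G) 0 hx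
    rw [mul_zero] at h
    rw [← h]
    refine setIntegral_congr_fun measurableSet_Ioi (fun r hr => ?_)
    have hrr : (0:ℝ) < r := hr
    have hpow : (x*r)^c / x^c = r^c := by
      rw [Real.mul_rpow hx.le hrr.le, mul_div_cancel_left₀ _ hxc.ne']
    rw [hG]
    simp only []
    rw [hpow]
  rw [hsub]
  set J : ℂ := ∫ u in Ioi (0:ℝ), G u with hJdef
  set L : ℂ := ∫ u in Ioi (0:ℝ), Complex.exp (-(u:ℂ)) with hLdef
  have hGsplit : ∀ u : ℝ, ((x^c : ℝ):ℂ) * G u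
      = ψ c t x u + ((x^c : ℝ):ℂ) * Complex.exp (-(u:ℂ)) := by
    intro u
    rw [ψ, hG]
    simp only []
    rw [show -(t:ℂ) * AA c * ((u^c/x^c : ℝ):ℂ) - ((u:ℝ):ℂ)
        = -(t:ℂ) * AA c * ((u^c/x^c : ℝ):ℂ) + (-(u:ℂ)) by push_cast; ring, Complex.exp_add]
    ring
  have hint1 : IntegrableOn (ψ c t x) (Ioi 0) := integrable_psi hc hc1 ht hx
  have hint2 : IntegrableOn (fun u : ℝ => ((x^c : ℝ):ℂ) * Complex.exp (-(u:ℂ))) (Ioi 0) :=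
    integrable_cexp_neg.const_mul _
  have hK : ((x^c : ℝ):ℂ) * J = (∫ u in Ioi (0:ℝ), ψ c t x u) + ((x^c : ℝ):ℂ) * L := by
    have h4 : (∫ u in Ioi (0:ℝ), ((x^c : ℝ):ℂ) • G u) = ((x^c : ℝ):ℂ) • J := integral_smul _ _
    simp only [smul_eq_mul] at h4
    have h5 : (∫ u in Ioi (0:ℝ), ((x^c : ℝ):ℂ) • Complex.exp (-(u:ℂ)))
        = ((x^c : ℝ):ℂ) • L := integral_smul _ _
    simp only [smul_eq_mul] at h5
    rw [← h4, ← h5, setIntegral_congr_fun measurableSet_Ioi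
      (fun u (hu : u ∈ Ioi (0:ℝ)) => hGsplit u)]
    exact integral_add hint1 hint2
  have hLim : L.im = 0 := by
    have h6 : L = (((∫ u in Ioi (0:ℝ), Real.exp (-u) : ℝ)):ℂ) := by
      rw [hLdef]
      rw [setIntegral_congr_fun measurableSet_Ioi (fun u (hu : u ∈ Ioi (0:ℝ)) => by
        rw [show -(u:ℂ) = ((-u : ℝ):ℂ) by push_cast; ring, ← Complex.ofReal_exp])]
      exact integral_ofReal (𝕜 := ℂ)
    rw [h6, Complex.ofReal_im]
  have hKim : (∫ u in Ioi (0:ℝ), ψ c t x u).im = x^c * J.im := by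
    have h7 := congrArg Complex.im hK
    simp only [Complex.mul_im, Complex.ofReal_re, Complex.ofReal_im, Complex.add_im,
      zero_mul, add_zero] at h7
    rw [hLim] at h7
    simp at h7
    linarith [h7]
  have hxx : x^(1+c) * x⁻¹ = x^c := by
    rw [Real.rpow_add hx, Real.rpow_one]
    field_simp
  rw [Complex.real_smul]
  simp only [Complex.mul_re, Complex.mul_im, Complex.I_re, Complex.I_im, Complex.ofReal_re,
    Complex.ofReal_im, zero_mul, one_mul, zero_sub, sub_zero, zero_add, mul_zero]
  rw [hKim]
  ring_nf
  linear_combination (-(J.im)) * hxx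


end FHKT


open FHKT in
/-- the algebraic-tail limit of the fractional heat kernel. -/
theorem fractional_heat_kernel_tail
    (s t : ℝ) (hs : 0 < s ∧ s ≤ 1/2) (ht : 0 < t) :
    (∫ u in Set.Ioi (0:ℝ), u ^ (2*s) * Real.exp (-u)) = Real.Gamma (1 + 2*s) ∧
    0 < t * Real.sin (Real.pi * s) * Real.Gamma (1 + 2*s) ∧
    Filter.Tendsto
      (fun x : ℝ => x ^ (1 + 2*s) *
        ∫ ξ in Set.Ioi (0:ℝ), Real.exp (-t * ξ ^ (2*s)) * Real.cos (x * ξ))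
      Filter.atTop
      (nhds (t * Real.sin (Real.pi * s) * Real.Gamma (1 + 2*s))) := by
  obtain ⟨hs0, hs1⟩ := hs
  have hpi := Real.pi_pos
  set c : ℝ := 2*s with hcdef
  have hc : 0 < c := by rw [hcdef]; linarith
  have hc1 : c ≤ 1 := by rw [hcdef]; linarith
  have hΓ : 0 < Real.Gamma (1+c) := Real.Gamma_pos_of_pos (by linarith)
  have hsin : 0 < Real.sin (π * s) :=
    Real.sin_pos_of_pos_of_lt_pi (by positivity) (by nlinarith)
  refine ⟨gamma_int hc, by positivity, ?_⟩
  have hDCT : Tendsto (fun x : ℝ => ∫ u in Ioi (0:ℝ), ψ c t x u) atTop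
      (𝓝 (-(t:ℂ) * AA c * ((Real.Gamma (1+c) : ℝ):ℂ))) := by
    rw [← integral_limit_fn hc (t := t)]
    apply tendsto_integral_filter_of_dominated_convergence
      (bound := fun u => 2 * t * u^c * Real.exp (-u))
    · filter_upwards [eventually_gt_atTop (0:ℝ)] with x hx
      exact ((continuous_psi hc).aestronglyMeasurable).restrict
    · filter_upwards [eventually_gt_atTop (0:ℝ)] with x hx
      refine (ae_restrict_iff' measurableSet_Ioi).mpr (ae_of_all _ (fun u hu => ?_))
      exact norm_psi_le hc hc1 ht hx hu
    · exact integrable_bound1 hc ht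
    · refine (ae_restrict_iff' measurableSet_Ioi).mpr (ae_of_all _ (fun u hu => ?_))
      exact psi_tendsto (x₀ := 0) hc ht hu
  have hre : Tendsto (fun x : ℝ => (Complex.I * ∫ u in Ioi (0:ℝ), ψ c t x u).re) atTop
      (𝓝 ((Complex.I * (-(t:ℂ) * AA c * ((Real.Gamma (1+c) : ℝ):ℂ))).re)) :=
    (Complex.continuous_re.tendsto _).comp (hDCT.const_mul Complex.I)
  have hval : (Complex.I * (-(t:ℂ) * AA c * ((Real.Gamma (1+c) : ℝ):ℂ))).re
      = t * Real.sin (π * s) * Real.Gamma (1+c) := by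
    simp only [Complex.mul_re, Complex.mul_im, Complex.I_re, Complex.I_im, Complex.ofReal_re,
      Complex.ofReal_im, Complex.neg_re, Complex.neg_im, im_AA, zero_mul, one_mul, mul_zero]
    rw [show c*(π/2) = π*s by rw [hcdef]; ring]
    ring
  rw [← hval]
  apply Tendsto.congr' _ hre
  filter_upwards [eventually_gt_atTop (0:ℝ)] with x hx
  exact (key_id hc hc1 ht hx).symm
end

section
/- Assume J satisfies Hypothesis (H) with s ∈ (0, 1/2), f is an ignition nonlinearity with threshold θ ∈ (0,1), and fix κ > 0, ε ∈ (θ,1) and γ ∈ [γ₀, 1/ε) with γ₀ as furnished by the far-field estimate (Proposition 4.6). Then there exists t₄ ≥ 1 such that for all t ≥ t₄ and all x ∈ [X(t), X_η(t)], one has 3 x^{2s} w(t,x)² / (κ t²) ≤ D[u̲](t,x) + f(u̲(t,x)). -/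
open MeasureTheory

noncomputable def Gsm (s κ γ ε t y : ℝ) : ℝ :=
  -(3 * (ε - w s κ γ t y) ^ 2 * (2 * s) * (w s κ γ t y) ^ 2 * y ^ (2 * s - 1)) / (ε ^ 2 * (κ * t))

noncomputable def Gder (s κ γ ε t y : ℝ) : ℝ :=
  (6 * s * (w s κ γ t y * (y ^ (2 * s) / (κ * t))) * w s κ γ t y * (ε - w s κ γ t y) /
      (ε ^ 2 * y ^ 2)) *
    ((1 - 2 * s) * (ε - w s κ γ t y) -
      4 * s * (w s κ γ t y * (y ^ (2 * s) / (κ * t))) * (w s κ γ t y - (ε - w s κ γ t y)))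

section basic
variable {s κ γ t c : ℝ}

lemma X_pos (hs : 0 < s) (hκt : 0 < κ * t) (hc : 0 < c⁻¹ - γ) : 0 < X s κ γ c t :=
  mul_pos (Real.rpow_pos_of_pos hc _) (Real.rpow_pos_of_pos hκt _)

lemma X_rpow (hs : 0 < s) (hκt : 0 < κ * t) (hc : 0 ≤ c⁻¹ - γ) :
    (X s κ γ c t) ^ (2*s) = (c⁻¹ - γ) * (κ * t) := by
  unfold X
  rw [Real.mul_rpow (Real.rpow_nonneg hc _) (Real.rpow_nonneg hκt.le _),
    ← Real.rpow_mul hc, ← Real.rpow_mul hκt.le, one_div,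
    inv_mul_cancel₀ (by positivity : (2*s) ≠ 0), Real.rpow_one, Real.rpow_one]

lemma w_pos (hκt : 0 < κ * t) (hγ : 0 < γ) {y : ℝ} (hy : 0 ≤ y) : 0 < w s κ γ t y := by
  have : 0 ≤ y ^ (2*s) := Real.rpow_nonneg hy _
  unfold w; positivity

lemma w_anti (hs : 0 < s) (hκt : 0 < κ * t) (hγ : 0 < γ) {a b : ℝ} (ha : 0 ≤ a) (hab : a ≤ b) :
    w s κ γ t b ≤ w s κ γ t a := by
  have h1 : 0 ≤ a ^ (2*s) := Real.rpow_nonneg ha _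
  have h2 : a ^ (2*s) ≤ b ^ (2*s) := Real.rpow_le_rpow ha hab (by positivity)
  unfold w
  have h3 : a ^ (2*s) / (κ*t) + γ ≤ b ^ (2*s) / (κ*t) + γ := by gcongr
  exact inv_anti₀ (by positivity) h3

lemma w_X (hs : 0 < s) (hκt : 0 < κ * t) (hc : 0 < c) (hγc : γ < c⁻¹) :
    w s κ γ t (X s κ γ c t) = c := by
  unfold w
  rw [X_rpow hs hκt (by linarith), mul_div_assoc, div_self hκt.ne', mul_one,
    sub_add_cancel, inv_inv]
end basic


section deriv
variable {s κ γ ε t : ℝ}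

lemma hasDerivAt_w (hκt : 0 < κ * t) (hγ : 0 < γ) {y : ℝ} (hy : 0 < y) :
    HasDerivAt (fun y => w s κ γ t y)
      (-(2 * s * y ^ (2*s-1) / (κ*t)) / (y ^ (2*s) / (κ*t) + γ) ^ 2) y := by
  have hQ : y ^ (2*s) / (κ*t) + γ ≠ 0 := by
    have : 0 ≤ y ^ (2*s) := Real.rpow_nonneg hy.le _
    positivity
  have h1 : HasDerivAt (fun y : ℝ => y ^ (2*s)) (2*s * y^(2*s-1)) y :=
    Real.hasDerivAt_rpow_const (Or.inl hy.ne')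
  exact ((h1.div_const (κ*t)).add_const γ).inv hQ

lemma hasDerivAt_Ftil (hκt : 0 < κ * t) (hγ : 0 < γ) (hε : 0 < ε) {y : ℝ} (hy : 0 < y) :
    HasDerivAt (fun y => ε - (ε - w s κ γ t y)^3/ε^2) (Gsm s κ γ ε t y) y := by
  have hQ : 0 < y ^ (2*s) / (κ*t) + γ := by
    have : 0 ≤ y ^ (2*s) := Real.rpow_nonneg hy.le _
    positivity
  have h4 := ((((hasDerivAt_w hκt hγ hy (s := s)).const_sub ε).pow 3).div_const (ε^2)).const_sub ε
  refine h4.congr_deriv ?_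
  have hW : w s κ γ t y = (y ^ (2*s) / (κ*t) + γ)⁻¹ := rfl
  have hw0 : w s κ γ t y ≠ 0 := by rw [hW]; positivity
  unfold Gsm
  rw [← inv_inv (y ^ (2*s) / (κ*t) + γ), ← hW]
  norm_num
  field_simp

lemma hasDerivAt_Gsm (hκt : 0 < κ * t) (hγ : 0 < γ) (hε : 0 < ε) {y : ℝ} (hy : 0 < y) :
    HasDerivAt (fun y => Gsm s κ γ ε t y) (Gder s κ γ ε t y) y := by
  have hQ : 0 < y ^ (2*s) / (κ*t) + γ := by
    have : 0 ≤ y ^ (2*s) := Real.rpow_nonneg hy.le _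
    positivity
  have hw := hasDerivAt_w hκt hγ hy (s := s)
  have ha := ((hw.const_sub ε).pow 2).const_mul 3
  have hb := ha.mul_const (2*s)
  have hc := hb.mul (hw.pow 2)
  have hr : HasDerivAt (fun y : ℝ => y ^ (2*s-1)) ((2*s-1) * y^(2*s-1-1)) y :=
    Real.hasDerivAt_rpow_const (Or.inl hy.ne')
  have hd := (hc.mul hr).neg.div_const (ε ^ 2 * (κ * t))
  refine hd.congr_deriv ?_
  have e1 : y ^ (2*s-1) = y ^ (2*s) / y := by
    rw [Real.rpow_sub hy, Real.rpow_one]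
  have e2 : y ^ (2*s-1-1) = y ^ (2*s) / y ^ 2 := by
    rw [Real.rpow_sub hy, Real.rpow_sub hy, Real.rpow_one]
    ring
  have hW : w s κ γ t y = (y ^ (2*s) / (κ*t) + γ)⁻¹ := rfl
  have hw0 : w s κ γ t y ≠ 0 := by rw [hW]; positivity
  unfold Gder
  simp only [Pi.pow_apply, Pi.mul_apply]
  rw [← inv_inv (y ^ (2*s) / (κ*t) + γ), ← hW, e1, e2]
  norm_num
  field_simp
  ring
end deriv

noncomputable def Gfun (s κ γ ε t y : ℝ) : ℝ :=
  -(3 * (max (ε - w s κ γ t (max y (X s κ γ ε t / 2))) 0) ^ 2 * (2 * s) *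
      (w s κ γ t (max y (X s κ γ ε t / 2))) ^ 2 * (max y (X s κ γ ε t / 2)) ^ (2 * s - 1)) /
    (ε ^ 2 * (κ * t))

section gfun
variable {s κ γ ε t : ℝ}

lemma Gfun_eq_zero (hs : 0 < s) (hκt : 0 < κ * t) (hγ : 0 < γ) (hε : 0 < ε) (hγε : γ < ε⁻¹)
    {y : ℝ} (hy : y ≤ X s κ γ ε t) : Gfun s κ γ ε t y = 0 := by
  have hX : 0 < X s κ γ ε t := X_pos hs hκt (by linarith)
  have hb1 : 0 < max y (X s κ γ ε t / 2) := lt_of_lt_of_le (by linarith) (le_max_right _ _)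
  have hb2 : max y (X s κ γ ε t / 2) ≤ X s κ γ ε t := max_le hy (by linarith)
  have hw : ε ≤ w s κ γ t (max y (X s κ γ ε t / 2)) := by
    have h := w_anti (s := s) (κ := κ) (γ := γ) (t := t) hs hκt hγ hb1.le hb2
    rwa [w_X hs hκt hε hγε] at h
  unfold Gfun
  rw [max_eq_right (by linarith : ε - w s κ γ t (max y (X s κ γ ε t / 2)) ≤ 0)]
  simp

lemma Gfun_eq_Gsm (hs : 0 < s) (hκt : 0 < κ * t) (hγ : 0 < γ) (hε : 0 < ε) (hγε : γ < ε⁻¹)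
    {y : ℝ} (hy : X s κ γ ε t ≤ y) : Gfun s κ γ ε t y = Gsm s κ γ ε t y := by
  have hX : 0 < X s κ γ ε t := X_pos hs hκt (by linarith)
  have hb : max y (X s κ γ ε t / 2) = y := max_eq_left (by linarith)
  have hw : w s κ γ t y ≤ ε := by
    have h := w_anti (s := s) (κ := κ) (γ := γ) (t := t) hs hκt hγ hX.le hy
    rwa [w_X hs hκt hε hγε] at h
  unfold Gfun Gsm
  rw [hb, max_eq_left (by linarith : 0 ≤ ε - w s κ γ t y)]

lemma ubar_eq_right (hε : 0 < ε) {t x : ℝ} (hnot : ¬ x ≤ X s κ γ ε t) :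
    ubar s κ γ ε t x = ε - (ε - w s κ γ t x)^3/ε^2 := by
  unfold ubar
  rw [if_neg hnot]
  field_simp
  ring

lemma ubar_hasDerivAt (hs : 0 < s) (hκt : 0 < κ * t) (hγ : 0 < γ) (hε : 0 < ε) (hγε : γ < ε⁻¹)
    (y : ℝ) : HasDerivAt (fun x => ubar s κ γ ε t x) (Gfun s κ γ ε t y) y := by
  have hX : 0 < X s κ γ ε t := X_pos hs hκt (by linarith)
  rcases lt_trichotomy y (X s κ γ ε t) with hlt | heq | hgt
  · rw [Gfun_eq_zero hs hκt hγ hε hγε hlt.le]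
    refine (hasDerivAt_const y ε).congr_of_eventuallyEq ?_
    filter_upwards [Iio_mem_nhds hlt] with v hv
    exact if_pos (le_of_lt hv)
  · subst heq
    have hFX : ubar s κ γ ε t (X s κ γ ε t) = ε := if_pos le_rfl
    have hl : HasDerivWithinAt (fun x => ubar s κ γ ε t x) 0
        (Set.Iic (X s κ γ ε t)) (X s κ γ ε t) :=
      (hasDerivWithinAt_const _ _ ε).congr (fun v hv => if_pos hv) hFX
    have hFtilX : ε - (ε - w s κ γ t (X s κ γ ε t))^3/ε^2 = ε := by
      rw [w_X hs hκt hε hγε]; simp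
    have hr : HasDerivWithinAt (fun x => ubar s κ γ ε t x) 0
        (Set.Ici (X s κ γ ε t)) (X s κ γ ε t) := by
      have h0 : Gsm s κ γ ε t (X s κ γ ε t) = 0 := by
        unfold Gsm
        rw [w_X hs hκt hε hγε]
        simp
      have hd := (hasDerivAt_Ftil hκt hγ hε hX (s := s)).hasDerivWithinAt
        (s := Set.Ici (X s κ γ ε t))
      rw [h0] at hd
      refine hd.congr (fun v hv => ?_) (by rw [hFX, hFtilX])
      rcases eq_or_lt_of_le (Set.mem_Ici.mp hv) with h | h
      · rw [← h, hFX, hFtilX]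
      · exact ubar_eq_right hε (not_le.mpr h)
    have := (hl.union hr)
    rw [Set.Iic_union_Ici, hasDerivWithinAt_univ] at this
    rw [Gfun_eq_zero hs hκt hγ hε hγε le_rfl]
    exact this
  · rw [Gfun_eq_Gsm hs hκt hγ hε hγε hgt.le]
    refine (hasDerivAt_Ftil hκt hγ hε (by linarith : (0:ℝ) < y)).congr_of_eventuallyEq ?_
    filter_upwards [Ioi_mem_nhds hgt] with v hv
    exact ubar_eq_right hε (not_le.mpr hv)

lemma Gfun_cont (hs : 0 < s) (hκt : 0 < κ * t) (hγ : 0 < γ) (hε : 0 < ε) (hγε : γ < ε⁻¹) :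
    Continuous (fun y => Gfun s κ γ ε t y) := by
  have hX : 0 < X s κ γ ε t := X_pos hs hκt (by linarith)
  have hb : Continuous (fun y : ℝ => max y (X s κ γ ε t / 2)) :=
    continuous_id.max continuous_const
  have hbne : ∀ y : ℝ, max y (X s κ γ ε t / 2) ≠ 0 := fun y =>
    ne_of_gt (lt_of_lt_of_le (by linarith) (le_max_right _ _))
  have h2s : Continuous fun y : ℝ => (max y (X s κ γ ε t / 2)) ^ (2*s) :=
    hb.rpow_const (fun y => Or.inl (hbne y))
  have h2s1 : Continuous fun y : ℝ => (max y (X s κ γ ε t / 2)) ^ (2*s-1) :=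
    hb.rpow_const (fun y => Or.inl (hbne y))
  have hQne : ∀ y : ℝ, (max y (X s κ γ ε t / 2)) ^ (2*s) / (κ*t) + γ ≠ 0 := by
    intro y
    have h0 : (0:ℝ) < max y (X s κ γ ε t / 2) :=
      lt_of_lt_of_le (by linarith) (le_max_right _ _)
    have : 0 ≤ (max y (X s κ γ ε t / 2)) ^ (2*s) := Real.rpow_nonneg h0.le _
    positivity
  have hw : Continuous (fun y : ℝ => w s κ γ t (max y (X s κ γ ε t / 2))) := by
    unfold w
    exact ((h2s.div_const _).add continuous_const).inv₀ hQne
  unfold Gfun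
  have h1 : Continuous fun y : ℝ =>
      max (ε - w s κ γ t (max y (X s κ γ ε t / 2))) 0 :=
    (continuous_const.sub hw).max continuous_const
  exact ((((continuous_const.mul (h1.pow 2)).mul continuous_const).mul
    (hw.pow 2)).mul h2s1).neg.div_const _
end gfun

section gder
variable {s κ γ ε t : ℝ}

lemma Gder_abs_le (hs : 0 < s) (hs2 : s < 1/2) (hκt : 0 < κ * t) (hγ : 0 < γ) (hε : 0 < ε)
    {y : ℝ} (hy : 0 < y) (hwle : w s κ γ t y ≤ ε) :
    |Gder s κ γ ε t y| ≤ 12 * s * ε / y ^ 2 := by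
  have hw0 : 0 < w s κ γ t y := w_pos hκt hγ hy.le
  have hyp : 0 < y ^ (2*s) := Real.rpow_pos_of_pos hy _
  unfold Gder
  set ww := w s κ γ t y with hww
  set p := y ^ (2 * s) / (κ * t) with hp
  have hp0 : 0 < p := by rw [hp]; positivity
  have hQ : ww * (p + γ) = 1 := by
    rw [hww, hp]
    unfold w
    rw [inv_mul_cancel₀ (by positivity)]
  have haa : ww * p ≤ 1 := by nlinarith
  have ha0 : 0 < ww * p := mul_pos hw0 hp0
  have hu0 : 0 ≤ ε - ww := by linarith
  have huε : ε - ww ≤ ε := by linarith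
  have hA0 : 0 ≤ ww * p * ww := by positivity
  have hB0 : 0 ≤ ww * p * (ε - ww) := by positivity
  have hAε : ww * p * ww ≤ ε := by nlinarith
  have hBε : ww * p * (ε - ww) ≤ ε := by nlinarith
  rw [abs_mul]
  have hpre0 : 0 ≤ 6 * s * (ww * p) * ww * (ε - ww) / (ε ^ 2 * y ^ 2) := by positivity
  have hpre : |6 * s * (ww * p) * ww * (ε - ww) / (ε ^ 2 * y ^ 2)| ≤ 6 * s / y ^ 2 := by
    rw [abs_of_nonneg hpre0]
    rw [div_le_div_iff₀ (by positivity) (by positivity)]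
    have M1 : ww * p * ww * (ε - ww) ≤ ε * ε := mul_le_mul hAε huε hu0 hε.le
    nlinarith [mul_nonneg (mul_nonneg hs.le (sq_nonneg y)) (sub_nonneg.mpr M1)]
  have hbr : |(1 - 2 * s) * (ε - ww) - 4 * s * (ww * p) * (ww - (ε - ww))| ≤ 2 * ε := by
    rw [abs_le]
    constructor <;>
      nlinarith [mul_nonneg (by linarith : (0:ℝ) ≤ 1/2 - s) hA0,
        mul_nonneg (by linarith : (0:ℝ) ≤ 1/2 - s) hB0,
        mul_nonneg (by linarith : (0:ℝ) ≤ 1/2 - s) hu0,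
        mul_nonneg hs.le hu0, mul_nonneg hs.le hA0, mul_nonneg hs.le hB0]
  calc |6 * s * (ww * p) * ww * (ε - ww) / (ε ^ 2 * y ^ 2)| *
        |(1 - 2 * s) * (ε - ww) - 4 * s * (ww * p) * (ww - (ε - ww))|
      ≤ (6 * s / y ^ 2) * (2 * ε) :=
        mul_le_mul hpre hbr (abs_nonneg _) (by positivity)
    _ = 12 * s * ε / y ^ 2 := by ring

lemma Gder_lower (hs : 0 < s) (hs2 : s < 1/2) (hκt : 0 < κ * t) (hγ : 0 < γ) (hε : 0 < ε)
    (hγε : γ * ε < 1) {y : ℝ} (hy : 0 < y) (hwhalf : w s κ γ t y ≤ ε / 2) :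
    3/2 * s * (1 - 2*s) * (1 - γ*ε) * (w s κ γ t y) / y ^ 2 ≤ Gder s κ γ ε t y := by
  have hw0 : 0 < w s κ γ t y := w_pos hκt hγ hy.le
  have hyp : 0 < y ^ (2*s) := Real.rpow_pos_of_pos hy _
  unfold Gder
  set ww := w s κ γ t y with hww
  set p := y ^ (2 * s) / (κ * t) with hp
  have hp0 : 0 < p := by rw [hp]; positivity
  have hQ : ww * (p + γ) = 1 := by
    rw [hww, hp]
    unfold w
    rw [inv_mul_cancel₀ (by positivity)]
  have haa : ww * p ≤ 1 := by nlinarith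
  have ha1 : 1 - γ * ε ≤ ww * p := by nlinarith
  have ha1' : 0 < 1 - γ * ε := by linarith
  have hu : ε/2 ≤ ε - ww := by linarith
  have hbr : (1 - 2*s) * (ε/2) ≤
      (1 - 2 * s) * (ε - ww) - 4 * s * (ww * p) * (ww - (ε - ww)) := by
    nlinarith [mul_nonneg (mul_nonneg hs.le (mul_pos hw0 hp0).le)
        (by linarith : (0:ℝ) ≤ (ε - ww) - ww)]
  have hu0' : (0:ℝ) ≤ ε - ww := by linarith
  have hpre : 3 * s * (1 - γ*ε) * ww / (ε * y ^ 2) ≤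
      6 * s * (ww * p) * ww * (ε - ww) / (ε ^ 2 * y ^ 2) := by
    rw [div_le_div_iff₀ (by positivity) (by positivity)]
    have M2 : (1 - γ*ε) * (ε/2) ≤ (ww * p) * (ε - ww) :=
      mul_le_mul ha1 hu (by positivity) (mul_pos hw0 hp0).le
    nlinarith [mul_nonneg (mul_nonneg (mul_nonneg hs.le hw0.le) (sq_nonneg y))
      (sub_nonneg.mpr M2), hε.le]
  have hpreNN : 0 ≤ 6 * s * (ww * p) * ww * (ε - ww) / (ε ^ 2 * y ^ 2) :=
    div_nonneg (mul_nonneg (by positivity) hu0') (by positivity)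
  have hbr0 : (0:ℝ) ≤ (1 - 2*s) * (ε/2) := mul_nonneg (by linarith) (by positivity)
  calc 3/2 * s * (1 - 2*s) * (1 - γ*ε) * ww / y ^ 2
      = (3 * s * (1 - γ*ε) * ww / (ε * y ^ 2)) * ((1 - 2*s) * (ε/2)) := by
        field_simp
    _ ≤ (6 * s * (ww * p) * ww * (ε - ww) / (ε ^ 2 * y ^ 2)) *
        ((1 - 2 * s) * (ε - ww) - 4 * s * (ww * p) * (ww - (ε - ww))) :=
        mul_le_mul hpre hbr hbr0 hpreNN

end gder

/-- Second-difference lower bound via an integral representation of differences. -/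
lemma sd_lower (F G : ℝ → ℝ) (hF : ∀ y, HasDerivAt F (G y) y) (hG : Continuous G)
    (x z L : ℝ) (hz : 0 < z) (hL : ∀ y ∈ Set.Icc x (x + z), L ≤ G y - G (y - z)) :
    L * z ≤ F (x + z) + F (x - z) - 2 * F x := by
  have h1 : ∫ y in x..(x + z), G y = F (x + z) - F x :=
    intervalIntegral.integral_eq_sub_of_hasDerivAt (fun y _ => hF y)
      (hG.intervalIntegrable _ _)
  have h2 : ∫ y in (x - z)..x, G y = F x - F (x - z) :=
    intervalIntegral.integral_eq_sub_of_hasDerivAt (fun y _ => hF y)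
      (hG.intervalIntegrable _ _)
  have h3 : ∫ y in x..(x + z), G (y - z) = ∫ y in (x - z)..x, G y := by
    have := intervalIntegral.integral_comp_sub_right (a := x) (b := x + z) G z
    rwa [add_sub_cancel_right] at this
  have hGz : Continuous fun y => G (y - z) := hG.comp (continuous_sub_right z)
  have h4 : ∫ y in x..(x + z), (G y - G (y - z)) = (F (x + z) - F x) - (F x - F (x - z)) := by
    rw [intervalIntegral.integral_sub (hG.intervalIntegrable _ _)
      (hGz.intervalIntegrable _ _), h1, h3, h2]
  have h5 : L * z ≤ ∫ y in x..(x + z), (G y - G (y - z)) := by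
    have hmono := intervalIntegral.integral_mono_on (by linarith : x ≤ x + z)
      (intervalIntegrable_const (μ := volume) (c := L))
      ((hG.sub hGz).intervalIntegrable _ _) hL
    rwa [intervalIntegral.integral_const, add_sub_cancel_left, smul_eq_mul, mul_comm] at hmono
  linarith [h4 ▸ h5]

section glip
variable {s κ γ ε t : ℝ}

lemma Gfun_hasDerivWithinAt (hs : 0 < s) (hκt : 0 < κ * t) (hγ : 0 < γ) (hε : 0 < ε)
    (hγε : γ < ε⁻¹) {y : ℝ} (hy : y ∈ Set.Ici (X s κ γ ε t)) :
    HasDerivWithinAt (fun v => Gfun s κ γ ε t v) (Gder s κ γ ε t y)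
      (Set.Ici (X s κ γ ε t)) y := by
  have hX : 0 < X s κ γ ε t := X_pos hs hκt (by linarith)
  have hy0 : 0 < y := lt_of_lt_of_le hX hy
  exact ((hasDerivAt_Gsm hκt hγ hε hy0).hasDerivWithinAt).congr
    (fun v hv => Gfun_eq_Gsm hs hκt hγ hε hγε hv)
    (Gfun_eq_Gsm hs hκt hγ hε hγε hy)

lemma w_le_eps (hs : 0 < s) (hκt : 0 < κ * t) (hγ : 0 < γ) (hε : 0 < ε) (hγε : γ < ε⁻¹)
    {y : ℝ} (hy : X s κ γ ε t ≤ y) : w s κ γ t y ≤ ε := by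
  have hX : 0 < X s κ γ ε t := X_pos hs hκt (by linarith)
  have h := w_anti (s := s) (κ := κ) (γ := γ) (t := t) hs hκt hγ hX.le hy
  rwa [w_X hs hκt hε hγε] at h

lemma Gfun_onesided (hs : 0 < s) (hs2 : s < 1/2) (hκt : 0 < κ * t) (hγ : 0 < γ) (hε : 0 < ε)
    (hγε : γ < ε⁻¹) {a b : ℝ} (hab : a ≤ b) :
    -(12 * s * ε / (X s κ γ ε t) ^ 2 * (b - a)) ≤ Gfun s κ γ ε t b - Gfun s κ γ ε t a := by
  have hX : 0 < X s κ γ ε t := X_pos hs hκt (by linarith)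
  set M := 12 * s * ε / (X s κ γ ε t) ^ 2 with hM
  have hM0 : 0 ≤ M := by rw [hM]; positivity
  have hlip : ∀ u v : ℝ, u ∈ Set.Ici (X s κ γ ε t) → v ∈ Set.Ici (X s κ γ ε t) →
      |Gfun s κ γ ε t v - Gfun s κ γ ε t u| ≤ M * |v - u| := by
    intro u v hu hv
    have hbound : ∀ y ∈ Set.Ici (X s κ γ ε t), ‖Gder s κ γ ε t y‖ ≤ M := by
      intro y hy
      have hy0 : 0 < y := lt_of_lt_of_le hX hy
      have h1 := Gder_abs_le hs hs2 hκt hγ hε hy0 (w_le_eps hs hκt hγ hε hγε hy)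
      have h2 : 12 * s * ε / y ^ 2 ≤ M := by
        rw [hM, div_le_div_iff₀ (by positivity) (by positivity)]
        have hXy : X s κ γ ε t ≤ y := hy
        nlinarith [mul_nonneg (mul_nonneg hs.le hε.le)
          (by nlinarith : (0:ℝ) ≤ y^2 - (X s κ γ ε t)^2)]
      exact le_trans h1 h2
    have := Convex.norm_image_sub_le_of_norm_hasDerivWithin_le
      (fun y hy => Gfun_hasDerivWithinAt hs hκt hγ hε hγε hy) hbound
      (convex_Ici _) hu hv
    simpa [Real.norm_eq_abs] using this
  rcases le_total b (X s κ γ ε t) with hb | hb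
  · rw [Gfun_eq_zero hs hκt hγ hε hγε (le_trans hab hb), Gfun_eq_zero hs hκt hγ hε hγε hb]
    simp only [sub_zero, sub_self]
    nlinarith
  · rcases le_total a (X s κ γ ε t) with ha | ha
    · have h1 := hlip (X s κ γ ε t) b Set.self_mem_Ici hb
      rw [Gfun_eq_zero hs hκt hγ hε hγε le_rfl] at h1
      rw [Gfun_eq_zero hs hκt hγ hε hγε ha]
      have h2 : |b - X s κ γ ε t| ≤ b - a := by
        rw [abs_of_nonneg (by linarith)]; linarith
      have := neg_abs_le (Gfun s κ γ ε t b - 0)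
      have h3 : |Gfun s κ γ ε t b - 0| ≤ M * (b - a) :=
        le_trans h1 (by nlinarith)
      simp only [sub_zero] at *
      linarith [neg_abs_le (Gfun s κ γ ε t b)]
    · have h1 := hlip a b ha hb
      have h2 : |b - a| = b - a := abs_of_nonneg (by linarith)
      rw [h2] at h1
      linarith [neg_abs_le (Gfun s κ γ ε t b - Gfun s κ γ ε t a)]
end glip

section sdmain
variable {s κ γ ε t : ℝ}

lemma ubar_range (hs : 0 < s) (hκt : 0 < κ * t) (hγ : 0 < γ) (hε : 0 < ε) (hγε : γ < ε⁻¹)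
    (y : ℝ) : 0 ≤ ubar s κ γ ε t y ∧ ubar s κ γ ε t y ≤ ε := by
  have hX : 0 < X s κ γ ε t := X_pos hs hκt (by linarith)
  by_cases hy : y ≤ X s κ γ ε t
  · unfold ubar; rw [if_pos hy]; exact ⟨hε.le, le_rfl⟩
  · rw [ubar_eq_right hε hy]
    push_neg at hy
    have hw0 : 0 < w s κ γ t y := w_pos hκt hγ (by linarith)
    have hwε : w s κ γ t y ≤ ε := w_le_eps hs hκt hγ hε hγε hy.le
    constructor
    · rw [le_sub_iff_add_le, zero_add, div_le_iff₀ (by positivity)]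
      nlinarith [pow_le_pow_left₀ (by linarith : (0:ℝ) ≤ ε - w s κ γ t y)
        (by linarith : ε - w s κ γ t y ≤ ε) 3]
    · have h3 : 0 ≤ (ε - w s κ γ t y)^3 := pow_nonneg (by linarith) 3
      have : 0 ≤ (ε - w s κ γ t y)^3 / ε^2 := div_nonneg h3 (by positivity)
      linarith

lemma sd_main (hs : 0 < s) (hs2 : s < 1/2) (hκt : 0 < κ * t) (hγ : 0 < γ) (hε : 0 < ε)
    (hγε : γ < ε⁻¹) (x z : ℝ) (hz : 0 < z) :
    -(12 * s * ε / (X s κ γ ε t) ^ 2 * z ^ 2) ≤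
      ubar s κ γ ε t (x + z) + ubar s κ γ ε t (x - z) - 2 * ubar s κ γ ε t x := by
  have h := sd_lower (fun v => ubar s κ γ ε t v) (fun v => Gfun s κ γ ε t v)
    (ubar_hasDerivAt hs hκt hγ hε hγε) (Gfun_cont hs hκt hγ hε hγε) x z
    (-(12 * s * ε / (X s κ γ ε t) ^ 2 * z)) hz ?_
  · calc -(12 * s * ε / (X s κ γ ε t) ^ 2 * z ^ 2)
        = -(12 * s * ε / (X s κ γ ε t) ^ 2 * z) * z := by ring
      _ ≤ _ := h
  · intro y hy
    have h1 := Gfun_onesided hs hs2 hκt hγ hε hγε (a := y - z) (b := y) (by linarith)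
    calc -(12 * s * ε / (X s κ γ ε t) ^ 2 * z)
        = -(12 * s * ε / (X s κ γ ε t) ^ 2 * (y - (y - z))) := by ring_nf
      _ ≤ _ := h1

lemma sd_far (hs : 0 < s) (hs2 : s < 1/2) (hκt : 0 < κ * t) (hγ : 0 < γ) (hε : 0 < ε)
    (hγε : γ < ε⁻¹) {xb : ℝ} (hxb : X s κ γ ε t < xb - 1)
    (hhalf : w s κ γ t (xb - 1) ≤ ε / 2) {z : ℝ} (hz : 0 < z) (hz1 : z ≤ 1) :
    3/2 * s * (1 - 2*s) * (1 - γ*ε) * (w s κ γ t (xb + 1)) / ((xb + 1) ^ 2) * z ^ 2 ≤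
      ubar s κ γ ε t (xb + z) + ubar s κ γ ε t (xb - z) - 2 * ubar s κ γ ε t xb := by
  have hX : 0 < X s κ γ ε t := X_pos hs hκt (by linarith)
  have hγε1 : γ * ε < 1 := by
    have := mul_lt_mul_of_pos_right hγε hε
    rwa [inv_mul_cancel₀ hε.ne'] at this
  set c' := 3/2 * s * (1 - 2*s) * (1 - γ*ε) * (w s κ γ t (xb + 1)) / ((xb + 1) ^ 2) with hc'
  have hxb0 : 0 < xb - 1 := lt_trans hX hxb
  have hwp : 0 < w s κ γ t (xb + 1) := w_pos hκt hγ (by linarith)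
  -- monotonicity of Gfun - c' * id on Icc (xb-1) (xb+1)
  have hH : ∀ y ∈ Set.Ioo (xb - 1) (xb + 1),
      HasDerivAt (fun v => Gfun s κ γ ε t v - c' * v) (Gder s κ γ ε t y - c' * 1) y := by
    intro y hy
    have hyX : X s κ γ ε t < y := lt_trans hxb hy.1
    have hG : HasDerivAt (fun v => Gfun s κ γ ε t v) (Gder s κ γ ε t y) y := by
      refine (hasDerivAt_Gsm hκt hγ hε (lt_trans hX hyX)).congr_of_eventuallyEq ?_
      filter_upwards [Ioi_mem_nhds hyX] with v hv
      exact Gfun_eq_Gsm hs hκt hγ hε hγε (le_of_lt hv)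
    exact hG.sub ((hasDerivAt_id y).const_mul c')
  have hmono : MonotoneOn (fun v => Gfun s κ γ ε t v - c' * v)
      (Set.Icc (xb - 1) (xb + 1)) := by
    apply monotoneOn_of_deriv_nonneg (convex_Icc _ _)
    · exact ((Gfun_cont hs hκt hγ hε hγε).sub
        (continuous_const.mul continuous_id)).continuousOn
    · rw [interior_Icc]
      exact fun y hy => (hH y hy).differentiableAt.differentiableWithinAt
    · rw [interior_Icc]
      intro y hy
      rw [(hH y hy).deriv]
      have hy0 : 0 < y := by have := hy.1; linarith
      have hwy : w s κ γ t y ≤ ε / 2 :=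
        le_trans (w_anti hs hκt hγ hxb0.le hy.1.le) hhalf
      have hlow := Gder_lower hs hs2 hκt hγ hε hγε1 hy0 hwy
      have hcle : c' ≤ 3/2 * s * (1 - 2*s) * (1 - γ*ε) * (w s κ γ t y) / y ^ 2 := by
        rw [hc', div_le_div_iff₀ (pow_pos (by linarith) 2) (pow_pos hy0 2)]
        have hwle : w s κ γ t (xb + 1) ≤ w s κ γ t y := w_anti hs hκt hγ hy0.le hy.2.le
        have hy2 : y ^ 2 ≤ (xb + 1) ^ 2 := by nlinarith [hy.2, hy.1]
        have hC : (0:ℝ) ≤ 3/2 * s * (1 - 2*s) * (1 - γ*ε) := by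
          have h1 : (0:ℝ) ≤ 1 - 2*s := by linarith
          have h2 : (0:ℝ) ≤ 1 - γ*ε := by linarith
          positivity
        have hkey : w s κ γ t (xb + 1) * y ^ 2 ≤ w s κ γ t y * (xb + 1) ^ 2 :=
          mul_le_mul hwle hy2 (sq_nonneg y) (w_pos hκt hγ hy0.le).le
        nlinarith [mul_nonneg hC (sub_nonneg.mpr hkey)]
      linarith [le_trans hcle hlow]
  have h := sd_lower (fun v => ubar s κ γ ε t v) (fun v => Gfun s κ γ ε t v)
    (ubar_hasDerivAt hs hκt hγ hε hγε) (Gfun_cont hs hκt hγ hε hγε) xb z (c' * z) hz ?_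
  · calc c' * z ^ 2 = (c' * z) * z := by ring
      _ ≤ _ := h
  · intro y hy
    have hmem1 : y - z ∈ Set.Icc (xb - 1) (xb + 1) := by
      constructor <;> [linarith [hy.1]; linarith [hy.2]]
    have hmem2 : y ∈ Set.Icc (xb - 1) (xb + 1) := by
      constructor <;> [linarith [hy.1]; linarith [hy.2]]
    have := hmono hmem1 hmem2 (by linarith)
    simp only at this
    linarith
end sdmain


set_option maxHeartbeats 2000000 in
/-- Lemma 4.7: on the interval `[X(t), X_η(t)]`, for large times,
`3 x^{2s} w²/(κt²) ≤ D[u̲] + f(u̲)`.  Here `γ₀` is as furnished by the far-field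
estimate (Proposition 4.6), encoded by the hypothesis `hfar`. -/
theorem subsolution_first_interval
    (s θ κ γ γ₀ ε η J0 J1 R0 : ℝ) (J f : ℝ → ℝ) (hs : 0 < s ∧ s < 1/2)
    (hθ : 0 < θ ∧ θ < 1) (hJ : HypH s J0 J1 R0 J) (hf : Ignition θ f)
    (hκ : 0 < κ) (hε : θ < ε ∧ ε < 1)
    (hη : 0 < η ∧ η ^ 3 / ε ^ 2 + η = ε - θ)
    (hγ₀ : 0 < γ₀ ∧ γ₀ < 1/ε)
    (hfar : ∃ t₃ : ℝ, 1 ≤ t₃ ∧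
      ∀ γ' : ℝ, γ₀ ≤ γ' → γ' < 1/ε →
        ∀ t x : ℝ, t₃ ≤ t →
          max (X s κ γ' ε t + R0) (X s κ γ' (ε - η) t) < x →
          η / (16 * J0 * s * x ^ (2*s)) ≤ Dop J (ubar s κ γ' ε) t x)
    (hγ : γ₀ ≤ γ ∧ γ < 1/ε) :
    ∃ t₄ : ℝ, 1 ≤ t₄ ∧ ∀ t x : ℝ, t₄ ≤ t →
      x ∈ Set.Icc (X s κ γ ε t) (X s κ γ (ε - η) t) →
      3 * x ^ (2*s) * (w s κ γ t x) ^ 2 / (κ * t ^ 2) ≤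
        Dop J (ubar s κ γ ε) t x + f (ubar s κ γ ε t x) := by
  obtain ⟨hs0, hs2⟩ := hs
  obtain ⟨hθ0, hθ1⟩ := hθ
  obtain ⟨hJ0, hJ1, hR0, hJnn, hJeven, hJint, hJub, hJlb⟩ := hJ
  obtain ⟨⟨K, hlip⟩, hf0, hfpos, hf1⟩ := hf
  obtain ⟨hθε, hε1⟩ := hε
  obtain ⟨hη0, hηeq⟩ := hη
  obtain ⟨hγ₀0, hγ₀ε⟩ := hγ₀
  obtain ⟨t₃, ht₃1, hfar3⟩ := hfar
  obtain ⟨hγγ₀, hγε'⟩ := hγ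
  have hε0 : 0 < ε := lt_trans hθ0 hθε
  have hγpos : 0 < γ := lt_of_lt_of_le hγ₀0 hγγ₀
  have hγε : γ < ε⁻¹ := by rwa [one_div] at hγε'
  have hγε1 : γ * ε < 1 := by
    have := mul_lt_mul_of_pos_right hγε hε0
    rwa [inv_mul_cancel₀ hε0.ne'] at this
  have hηn : η ≤ ε - θ := by
    linarith only [hηeq, div_nonneg (pow_nonneg hη0.le 3) (sq_nonneg ε)]
  have hεη0 : 0 < ε - η := by linarith
  have hθη : θ + η ≤ ε := by linarith
  have hγεη : γ < (ε - η)⁻¹ :=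
    lt_of_lt_of_le hγε (by
      apply inv_anti₀ hεη0
      linarith)
  have h12s : (0:ℝ) < 1 - 2*s := by linarith
  have h1γε : (0:ℝ) < 1 - γ*ε := by linarith
  -- minimum of f on [θ+η, ε]
  have hsub : Set.Icc (θ+η) ε ⊆ Set.Icc 0 1 :=
    Set.Icc_subset_Icc (by linarith) (by linarith)
  have hcont : ContinuousOn f (Set.Icc (θ+η) ε) := (hlip.continuousOn).mono hsub
  obtain ⟨v₀, hv₀, hmin⟩ :=
    isCompact_Icc.exists_isMinOn (Set.nonempty_Icc.mpr hθη) hcont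
  set m := f v₀ with hm
  have hm0 : 0 < m := hfpos v₀ (by linarith [hv₀.1]) (by linarith [hv₀.2])
  have hfm : ∀ v ∈ Set.Icc (θ+η) ε, m ≤ f v := fun v hv => hmin hv
  -- far point: integrability of z² J near 0
  have ht₃0 : 0 < t₃ := by linarith
  have hκt₃ : 0 < κ * t₃ := mul_pos hκ ht₃0
  have hXε3 : 0 < X s κ γ ε t₃ := X_pos hs0 hκt₃ (by linarith)
  have hγhalf : γ < (ε/2)⁻¹ :=
    lt_of_lt_of_le hγε (inv_anti₀ (by linarith) (by linarith))
  set MM := max (max (X s κ γ ε t₃ + R0) (X s κ γ (ε-η) t₃)) (X s κ γ (ε/2) t₃ + 1)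
    with hMM
  set xb := MM + 1 with hxbdef
  have hMM1 : X s κ γ ε t₃ + R0 ≤ MM := le_trans (le_max_left _ _) (le_max_left _ _)
  have hMM3 : X s κ γ (ε/2) t₃ + 1 ≤ MM := le_max_right _ _
  have hfarx : max (X s κ γ ε t₃ + R0) (X s κ γ (ε-η) t₃) < xb :=
    lt_of_le_of_lt (le_max_left _ _) (by rw [hxbdef]; linarith)
  have hxb1 : X s κ γ ε t₃ < xb - 1 := by
    rw [hxbdef, add_sub_cancel_right]
    linarith
  have hXh30 : 0 < X s κ γ (ε/2) t₃ := X_pos hs0 hκt₃ (by linarith)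
  have hxbhalf : w s κ γ t₃ (xb - 1) ≤ ε/2 := by
    have h1 : X s κ γ (ε/2) t₃ ≤ xb - 1 := by
      rw [hxbdef, add_sub_cancel_right]; linarith
    have h2 := w_anti (s := s) (κ := κ) (γ := γ) (t := t₃) hs0 hκt₃ hγpos hXh30.le h1
    rwa [w_X hs0 hκt₃ (by linarith) hγhalf] at h2
  have hxb0 : 0 < xb := by linarith
  have hd := hfar3 γ hγγ₀ hγε' t₃ xb le_rfl hfarx
  have hdpos : 0 < η / (16*J0*s*xb^(2*s)) := by
    have := Real.rpow_pos_of_pos hxb0 (2*s)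
    positivity
  have hgbInt : Integrable (fun z => (ubar s κ γ ε t₃ (xb + z) + ubar s κ γ ε t₃ (xb - z)
      - 2 * ubar s κ γ ε t₃ xb) * J z) (volume.restrict (Set.Ioi 0)) := by
    by_contra hno
    have h0 : Dop J (ubar s κ γ ε) t₃ xb = 0 := integral_undef hno
    rw [h0] at hd
    linarith
  have hwxb1 : 0 < w s κ γ t₃ (xb + 1) := w_pos hκt₃ hγpos (by linarith)
  set c' := 3/2 * s * (1 - 2*s) * (1 - γ*ε) * (w s κ γ t₃ (xb + 1)) / ((xb + 1) ^ 2)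
    with hc'
  have hc'0 : 0 < c' :=
    div_pos (mul_pos (mul_pos (mul_pos (mul_pos (by norm_num) hs0) h12s) h1γε) hwxb1)
      (pow_pos (by linarith) 2)
  have hgb_low : ∀ z ∈ Set.Ioc (0:ℝ) 1, c' * z^2 ≤ ubar s κ γ ε t₃ (xb + z)
      + ubar s κ γ ε t₃ (xb - z) - 2 * ubar s κ γ ε t₃ xb := by
    intro z hz
    have := sd_far hs0 hs2 hκt₃ hγpos hε0 hγε hxb1 hxbhalf hz.1 hz.2
    rw [← hc'] at this
    exact this
  have hz2J : IntegrableOn (fun z => z^2 * J z) (Set.Ioc (0:ℝ) 1) := by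
    have hgbI : IntegrableOn (fun z => (ubar s κ γ ε t₃ (xb + z) + ubar s κ γ ε t₃ (xb - z)
        - 2 * ubar s κ γ ε t₃ xb) * J z) (Set.Ioc (0:ℝ) 1) :=
      (show IntegrableOn _ (Set.Ioi (0:ℝ)) volume from hgbInt).mono_set
        Set.Ioc_subset_Ioi_self
    have hFc : Continuous (fun v => ubar s κ γ ε t₃ v) := by
      have : Differentiable ℝ (fun v => ubar s κ γ ε t₃ v) :=
        fun y => (ubar_hasDerivAt hs0 hκt₃ hγpos hε0 hγε y).differentiableAt
      exact this.continuous
    have hd2c : Continuous (fun z : ℝ => ubar s κ γ ε t₃ (xb + z) + ubar s κ γ ε t₃ (xb - z)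
        - 2 * ubar s κ γ ε t₃ xb) := by
      exact ((hFc.comp (continuous_const.add continuous_id)).add
        (hFc.comp (continuous_const.sub continuous_id))).sub continuous_const
    have hd2pos : ∀ z ∈ Set.Ioc (0:ℝ) 1, 0 < ubar s κ γ ε t₃ (xb + z)
        + ubar s κ γ ε t₃ (xb - z) - 2 * ubar s κ γ ε t₃ xb :=
      fun z hz => lt_of_lt_of_le (mul_pos hc'0 (pow_pos hz.1 2)) (hgb_low z hz)
    have hquot : ContinuousOn (fun z : ℝ => z^2 / (ubar s κ γ ε t₃ (xb + z)
        + ubar s κ γ ε t₃ (xb - z) - 2 * ubar s κ γ ε t₃ xb)) (Set.Ioc (0:ℝ) 1) :=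
      ContinuousOn.div (continuous_pow 2).continuousOn hd2c.continuousOn
        (fun z hz => (hd2pos z hz).ne')
    have hb2 : IntegrableOn (fun z : ℝ => (z^2 / (ubar s κ γ ε t₃ (xb + z)
        + ubar s κ γ ε t₃ (xb - z) - 2 * ubar s κ γ ε t₃ xb)) *
        ((ubar s κ γ ε t₃ (xb + z) + ubar s κ γ ε t₃ (xb - z)
        - 2 * ubar s κ γ ε t₃ xb) * J z)) (Set.Ioc (0:ℝ) 1) := by
      apply Integrable.mono (hgbI.const_mul (1/c'))
      · exact (hquot.aestronglyMeasurable measurableSet_Ioc).mul hgbI.aestronglyMeasurable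
      · rw [ae_restrict_iff' measurableSet_Ioc]
        refine ae_of_all _ (fun z hz => ?_)
        have hdp := hd2pos z hz
        have hgb0 : 0 ≤ (ubar s κ γ ε t₃ (xb + z) + ubar s κ γ ε t₃ (xb - z)
            - 2 * ubar s κ γ ε t₃ xb) * J z := mul_nonneg hdp.le (hJnn z)
        have hq0 : 0 ≤ z^2 / (ubar s κ γ ε t₃ (xb + z) + ubar s κ γ ε t₃ (xb - z)
            - 2 * ubar s κ γ ε t₃ xb) := div_nonneg (sq_nonneg z) hdp.le
        rw [Real.norm_eq_abs, Real.norm_eq_abs, abs_of_nonneg (mul_nonneg hq0 hgb0),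
          abs_of_nonneg (mul_nonneg (by positivity) hgb0)]
        apply mul_le_mul_of_nonneg_right _ hgb0
        rw [div_le_div_iff₀ hdp (by positivity : (0:ℝ) < c'), one_mul]
        calc z^2 * c' = c' * z^2 := by ring
          _ ≤ _ := hgb_low z hz
    refine (integrableOn_congr_fun (fun z hz => ?_) measurableSet_Ioc).mp hb2
    have hdp := (lt_of_lt_of_le (mul_pos hc'0 (pow_pos hz.1 2)) (hgb_low z hz))
    field_simp
  set B₁ := ∫ z in Set.Ioc (0:ℝ) 1, z^2 * J z with hB₁
  have hB₁0 : 0 ≤ B₁ :=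
    setIntegral_nonneg measurableSet_Ioc (fun z hz => mul_nonneg (sq_nonneg z) (hJnn z))
  -- constants
  set A := max 1 ((4*ε*J0/(s*m)) ^ (1/(2*s))) with hA
  have hA1 : (1:ℝ) ≤ A := le_max_left _ _
  have hA0 : (0:ℝ) < A := lt_of_lt_of_le one_pos hA1
  have hA2s : 4*ε*J0/(s*m) ≤ A ^ (2*s) := by
    have hbase : (0:ℝ) ≤ 4*ε*J0/(s*m) := by positivity
    have h1 : ((4*ε*J0/(s*m)) ^ (1/(2*s))) ^ (2*s) ≤ A ^ (2*s) :=
      Real.rpow_le_rpow (Real.rpow_nonneg hbase _) (le_max_right _ _) (by positivity)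
    rwa [← Real.rpow_mul hbase, one_div, inv_mul_cancel₀ (by positivity),
      Real.rpow_one] at h1
  set Ca := (ε-η)⁻¹ - γ with hCaDef
  have hCa0 : 0 < Ca := by rw [hCaDef]; linarith
  set Cb := ε⁻¹ - γ with hCbDef
  have hCb0 : 0 < Cb := by rw [hCbDef]; linarith
  set KK := B₁ + J0*A^2 with hKK
  have hKK0 : 0 ≤ KK := by rw [hKK]; positivity
  refine ⟨max (max 1 (6*Ca*ε^2/m)) (max (48*s*ε*KK/(Cb*κ*m)) (Cb*κ)⁻¹),
    le_trans (le_max_left 1 _) (le_max_left _ _), ?_⟩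
  intro t x ht4 hx
  have ht1 : 1 ≤ t := le_trans (le_trans (le_max_left 1 _) (le_max_left _ _)) ht4
  have ht0 : 0 < t := by linarith
  have hκt : 0 < κ * t := mul_pos hκ ht0
  have hT1 : 6*Ca*ε^2/m ≤ t := le_trans (le_trans (le_max_right 1 _) (le_max_left _ _)) ht4
  have hT2 : 48*s*ε*KK/(Cb*κ*m) ≤ t :=
    le_trans (le_trans (le_max_left _ _) (le_max_right _ _)) ht4
  have hT3 : (Cb*κ)⁻¹ ≤ t := le_trans (le_trans (le_max_right _ _) (le_max_right _ _)) ht4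
  have hXt : 0 < X s κ γ ε t := X_pos hs0 hκt (by linarith)
  have hxX : X s κ γ ε t ≤ x := hx.1
  have hxXη : x ≤ X s κ γ (ε-η) t := hx.2
  have hx0 : 0 < x := lt_of_lt_of_le hXt hxX
  have hCbt : 1 ≤ Cb * (κ * t) := by
    have h1 := mul_le_mul_of_nonneg_left hT3 (mul_pos hCb0 hκ).le
    rw [mul_inv_cancel₀ (mul_pos hCb0 hκ).ne'] at h1
    linarith only [h1]
  have hXt1 : 1 ≤ X s κ γ ε t := by
    by_contra hlt
    push_neg at hlt
    have h1 : (X s κ γ ε t) ^ (2*s) < 1 :=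
      Real.rpow_lt_one hXt.le hlt (by positivity)
    rw [X_rpow hs0 hκt hCb0.le, ← hCbDef] at h1
    linarith only [h1, hCbt]
  set M := 12*s*ε/(X s κ γ ε t)^2 with hMdef
  have hM0 : 0 ≤ M := by rw [hMdef]; positivity
  have hMt : M ≤ 12*s*ε/(Cb*(κ*t)) := by
    have h1 : (X s κ γ ε t) ^ (2*s) ≤ (X s κ γ ε t) ^ ((2:ℕ):ℝ) :=
      Real.rpow_le_rpow_of_exponent_le hXt1 (by push_cast; linarith)
    rw [X_rpow hs0 hκt hCb0.le, Real.rpow_natCast] at h1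
    exact div_le_div_of_nonneg_left (by positivity) (by positivity) h1
  have hMK : M*KK ≤ m/4 := by
    have h2 : 12*s*ε/(Cb*(κ*t))*KK ≤ m/4 := by
      rw [div_mul_eq_mul_div, div_le_div_iff₀ (by positivity) (by norm_num)]
      have h3 : 48*s*ε*KK ≤ t*(Cb*κ*m) := (div_le_iff₀ (by positivity)).mp hT2
      linarith only [h3]
    exact le_trans (mul_le_mul_of_nonneg_right hMt hKK0) h2
  -- range of ubar at x
  have hwx0 : 0 < w s κ γ t x := w_pos hκt hγpos hx0.le
  have hwx_le : w s κ γ t x ≤ ε := w_le_eps hs0 hκt hγpos hε0 hγε hxX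
  have hwx_ge : ε - η ≤ w s κ γ t x := by
    have h1 := w_anti (s := s) (κ := κ) (γ := γ) (t := t) hs0 hκt hγpos hx0.le hxXη
    rwa [w_X hs0 hκt hεη0 hγεη] at h1
  have hux : ubar s κ γ ε t x ∈ Set.Icc (θ+η) ε := by
    by_cases hcc : x ≤ X s κ γ ε t
    · unfold ubar; rw [if_pos hcc]; exact ⟨hθη, le_rfl⟩
    · rw [ubar_eq_right hε0 hcc]
      constructor
      · have h1 : (ε - w s κ γ t x)^3 ≤ η^3 :=
          pow_le_pow_left₀ (by linarith) (by linarith) 3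
        have h2 : (ε - w s κ γ t x)^3/ε^2 ≤ η^3/ε^2 := by gcongr
        linarith
      · have h3 : 0 ≤ (ε - w s κ γ t x)^3 := pow_nonneg (by linarith) 3
        have h4 : 0 ≤ (ε - w s κ γ t x)^3/ε^2 := div_nonneg h3 (sq_nonneg ε)
        linarith
  have hfmx : m ≤ f (ubar s κ γ ε t x) := hfm _ hux
  -- bound on the left-hand side
  have hLHS : 3 * x^(2*s) * (w s κ γ t x)^2/(κ*t^2) ≤ m/2 := by
    have h1 : x^(2*s) ≤ Ca*(κ*t) := by
      have h2 := Real.rpow_le_rpow hx0.le hxXη (by positivity : (0:ℝ) ≤ 2*s)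
      rwa [X_rpow hs0 hκt hCa0.le] at h2
    have hw2 : (w s κ γ t x)^2 ≤ ε^2 := pow_le_pow_left₀ hwx0.le hwx_le 2
    have hnum : 3 * x^(2*s) * (w s κ γ t x)^2 ≤ 3*(Ca*(κ*t))*ε^2 := by
      linarith only [mul_le_mul h1 hw2 (sq_nonneg (w s κ γ t x))
        (by positivity : (0:ℝ) ≤ Ca*(κ*t))]
    calc 3 * x^(2*s) * (w s κ γ t x)^2/(κ*t^2) ≤ 3*(Ca*(κ*t))*ε^2/(κ*t^2) := by
          exact (div_le_div_iff_of_pos_right (by positivity)).mpr hnum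
      _ = 3*Ca*ε^2/t := by field_simp
      _ ≤ m/2 := by
          rw [div_le_div_iff₀ ht0 (by norm_num)]
          have h8 : 6*Ca*ε^2 ≤ t*m := (div_le_iff₀ hm0).mp hT1
          linarith only [h8]
  -- the dispersion term
  set gg := fun z : ℝ => (ubar s κ γ ε t (x + z) + ubar s κ γ ε t (x - z)
    - 2 * ubar s κ γ ε t x) * J z with hggdef
  have hDop : Dop J (ubar s κ γ ε) t x = ∫ z in Set.Ioi (0:ℝ), gg z := rfl
  by_cases hInt : Integrable gg (volume.restrict (Set.Ioi 0))
  · have hIOn : IntegrableOn gg (Set.Ioi (0:ℝ)) volume := hInt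
    have hI1 : IntegrableOn gg (Set.Ioc 0 1) := hIOn.mono_set Set.Ioc_subset_Ioi_self
    have hI2 : IntegrableOn gg (Set.Ioi 1) := hIOn.mono_set (Set.Ioi_subset_Ioi zero_le_one)
    have hI2a : IntegrableOn gg (Set.Ioc 1 A) := hI2.mono_set Set.Ioc_subset_Ioi_self
    have hI2b : IntegrableOn gg (Set.Ioi A) := hIOn.mono_set (Set.Ioi_subset_Ioi hA0.le)
    have heq1 : ∫ z in Set.Ioi (0:ℝ), gg z
        = (∫ z in Set.Ioc (0:ℝ) 1, gg z) + ∫ z in Set.Ioi (1:ℝ), gg z := by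
      rw [← setIntegral_union (Set.Ioc_disjoint_Ioi le_rfl) measurableSet_Ioi hI1 hI2,
        Set.Ioc_union_Ioi_eq_Ioi zero_le_one]
    have heq2 : ∫ z in Set.Ioi (1:ℝ), gg z
        = (∫ z in Set.Ioc (1:ℝ) A, gg z) + ∫ z in Set.Ioi A, gg z := by
      rw [← setIntegral_union (Set.Ioc_disjoint_Ioi le_rfl) measurableSet_Ioi hI2a hI2b,
        Set.Ioc_union_Ioi_eq_Ioi hA1]
    have hb1 : -(M*B₁) ≤ ∫ z in Set.Ioc (0:ℝ) 1, gg z := by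
      have hmono := setIntegral_mono_on ((hz2J.const_mul M).neg) hI1 measurableSet_Ioc
        (fun z hz => ?_)
      · simp only [Pi.neg_apply] at hmono
        rw [integral_neg, integral_const_mul, ← hB₁] at hmono
        exact hmono
      · have h2 := mul_le_mul_of_nonneg_right
          (sd_main hs0 hs2 hκt hγpos hε0 hγε x z hz.1) (hJnn z)
        calc -(M*(z^2*J z)) = -(12*s*ε/(X s κ γ ε t)^2*z^2) * J z := by rw [hMdef]; ring
          _ ≤ gg z := h2
    have hb2 : -(M*(J0*A)*(A-1)) ≤ ∫ z in Set.Ioc (1:ℝ) A, gg z := by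
      have hconst : IntegrableOn (fun _ : ℝ => -(M*(J0*A))) (Set.Ioc (1:ℝ) A) volume :=
        integrableOn_const measure_Ioc_lt_top.ne
      have hmono := setIntegral_mono_on hconst hI2a measurableSet_Ioc (fun z hz => ?_)
      · rw [setIntegral_const, Real.volume_real_Ioc_of_le hA1, smul_eq_mul] at hmono
        calc -(M*(J0*A)*(A-1)) = (A-1)*(-(M*(J0*A))) := by ring
          _ ≤ _ := hmono
      · have hz0 : (0:ℝ) < z := lt_trans one_pos hz.1
        have hJz : J z ≤ J0 * z^(-(1+2*s)) := by
          have h := hJub z (by rw [abs_of_pos hz0]; linarith [hz.1])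
          rwa [abs_of_pos hz0] at h
        have hzz : z^2 * z^(-(1+2*s)) ≤ A := by
          have e1 : z^2 * z^(-(1+2*s)) = z^(1-2*s) := by
            rw [← Real.rpow_natCast z 2, ← Real.rpow_add hz0]
            congr 1
            push_cast
            ring
          rw [e1]
          calc z^(1-2*s) ≤ z^(1:ℝ) :=
                Real.rpow_le_rpow_of_exponent_le (by linarith [hz.1]) (by linarith)
            _ = z := Real.rpow_one z
            _ ≤ A := hz.2
        have hsd := mul_le_mul_of_nonneg_right
          (sd_main hs0 hs2 hκt hγpos hε0 hγε x z hz0) (hJnn z)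
        have hstep : -(12*s*ε/(X s κ γ ε t)^2*z^2)*(J0 * z^(-(1+2*s)))
            ≤ -(12*s*ε/(X s κ γ ε t)^2*z^2)*(J z) := by
          apply mul_le_mul_of_nonpos_left hJz
          rw [← hMdef]
          linarith only [mul_nonneg hM0 (sq_nonneg z)]
        have hfin : -(M*(J0*A)) ≤ -(12*s*ε/(X s κ γ ε t)^2*z^2)*(J0 * z^(-(1+2*s))) := by
          rw [← hMdef]
          linarith only [mul_nonneg (mul_nonneg hM0 hJ0.le) (sub_nonneg.mpr hzz)]
        exact le_trans hfin (le_trans hstep hsd)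
    have hb3 : -(m/4) ≤ ∫ z in Set.Ioi A, gg z := by
      have hint3 : IntegrableOn (fun z : ℝ => -(2*ε*J0 * z^(-(1+2*s)))) (Set.Ioi A) volume :=
        ((integrableOn_Ioi_rpow_of_lt (by linarith) hA0).const_mul (2*ε*J0)).neg
      have hmono := setIntegral_mono_on hint3 hI2b measurableSet_Ioi (fun z hz => ?_)
      · have hval : (∫ z in Set.Ioi A, -(2*ε*J0 * z^(-(1+2*s))))
            = -(2*ε*J0 * (A^(-(2*s))/(2*s))) := by
          rw [integral_neg, integral_const_mul, integral_Ioi_rpow_of_lt (by linarith) hA0,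
            show (-(1+2*s)+1 : ℝ) = -(2*s) by ring, neg_div_neg_eq]
        rw [hval] at hmono
        refine le_trans ?_ hmono
        have hP : 0 < A^(2*s) := Real.rpow_pos_of_pos hA0 _
        have hPinv : A^(-(2*s)) = (A^(2*s))⁻¹ := Real.rpow_neg hA0.le _
        rw [hPinv, neg_le_neg_iff]
        have h6 : 4*ε*J0 ≤ A^(2*s) * (s*m) := (div_le_iff₀ (by positivity)).mp hA2s
        have e2 : 2*ε*J0*((A^(2*s))⁻¹/(2*s)) = (2*ε*J0)/(2*s*A^(2*s)) := by
          field_simp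
        rw [e2, div_le_div_iff₀ (by positivity) (by norm_num)]
        linarith only [h6]
      · have hz0 : (0:ℝ) < z := lt_of_le_of_lt (by linarith) hz
        have hz1 : (1:ℝ) ≤ z := le_trans hA1 (le_of_lt hz)
        have hJz : J z ≤ J0 * z^(-(1+2*s)) := by
          have h := hJub z (by rw [abs_of_pos hz0]; linarith)
          rwa [abs_of_pos hz0] at h
        obtain ⟨hp1, _⟩ := ubar_range hs0 hκt hγpos hε0 hγε (x+z)
        obtain ⟨hq1, _⟩ := ubar_range hs0 hκt hγpos hε0 hγε (x-z)
        obtain ⟨_, hr2⟩ := ubar_range hs0 hκt hγpos hε0 hγε x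
        have hd2 : -(2*ε) ≤ ubar s κ γ ε t (x + z) + ubar s κ γ ε t (x - z)
            - 2 * ubar s κ γ ε t x := by linarith
        have h1 : (-(2*ε))*(J z) ≤ gg z := mul_le_mul_of_nonneg_right hd2 (hJnn z)
        have h2 : (-(2*ε))*(J0 * z^(-(1+2*s))) ≤ (-(2*ε))*(J z) :=
          mul_le_mul_of_nonpos_left hJz (by linarith)
        calc -(2*ε*J0 * z^(-(1+2*s))) = (-(2*ε))*(J0 * z^(-(1+2*s))) := by ring
          _ ≤ _ := le_trans h2 h1
    have hAA : M*(J0*A)*(A-1) ≤ M*(J0*A^2) := by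
      linarith only [mul_nonneg (mul_nonneg hM0 hJ0.le) hA0.le]
    have hMKK : M*B₁ + M*(J0*A^2) ≤ m/4 := by
      have h9 : M*B₁ + M*(J0*A^2) = M*KK := by rw [hKK]; ring
      linarith only [hMK, h9]
    rw [hDop, heq1, heq2]
    linarith only [hb1, hb2, hb3, hAA, hMKK, hLHS, hfmx, hm0]
  · rw [hDop, integral_undef hInt]
    linarith only [hLHS, hfmx, hm0]
end
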